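/- arXiv:2404.11693 — 4 statements merged into one kernel-verified Lean document; each statement's English description precedes it below -/
import Mathlib

section
/- Let p ∈ (1,∞), α < β real numbers, and V(t) = |(t−α)(t−β)|^p / p. Then the function q(t) = (α + β·e^{(β−α)t/(p−1)^{1/p}})/(1 + e^{(β−α)t/(p−1)^{1/p}}) is the unique heteroclinic solution of the problem −(|u'|^{p−2}u')' + V'(u) = 0 on ℝ with u(0) = (α+β)/2, u(t) → α as t → −∞ and u(t) → β as t → +∞; that is, q satisfies all these conditions and every twice differentiable function with continuous derivative satisfying them equals q. -/
open Real Filter Set MeasureTheory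

noncomputable def Phi (φ : ℝ → ℝ) (t : ℝ) : ℝ := ∫ s in (0:ℝ)..|t|, s * φ s

def IsClassicalSolution (φ V q : ℝ → ℝ) : Prop :=
  Differentiable ℝ q ∧
  ∀ t : ℝ, HasDerivAt
    (fun s => if deriv q s = 0 then 0 else φ |deriv q s| * deriv q s)
    (deriv V (q t)) t

def IsHeteroclinic (φ V : ℝ → ℝ) (α : ℝ) (q : ℝ → ℝ) : Prop :=
  IsClassicalSolution φ V q ∧ Differentiable ℝ (deriv q) ∧ Continuous (deriv q) ∧
  q 0 = 0 ∧ Tendsto q atTop (nhds α) ∧ Tendsto q atBot (nhds (-α))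

def IsHeteroclinicAB (φ V : ℝ → ℝ) (α β : ℝ) (q : ℝ → ℝ) : Prop :=
  IsClassicalSolution φ V q ∧ Differentiable ℝ (deriv q) ∧ Continuous (deriv q) ∧
  q 0 = (α + β) / 2 ∧ Tendsto q atBot (nhds α) ∧ Tendsto q atTop (nhds β)


lemma abs_rpow_hasDerivAt {r : ℝ} (hr : 1 < r) (x : ℝ) :
    HasDerivAt (fun y : ℝ => |y| ^ r) (r * |x| ^ (r - 2) * x) x := by
  rcases lt_trichotomy x 0 with hx | hx | hx
  · have h1 : HasDerivAt (fun y : ℝ => (-y) ^ r) (r * (-x) ^ (r - 1) * (-1)) x := by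
      have := (hasDerivAt_neg x).rpow_const (p := r) (Or.inl (by simpa using hx.ne))
      simpa using this
    have h2 : (fun y : ℝ => |y| ^ r) =ᶠ[nhds x] (fun y : ℝ => (-y) ^ r) := by
      filter_upwards [Iio_mem_nhds hx] with y hy
      rw [abs_of_neg hy]
    have h3 : r * (-x) ^ (r - 1) * (-1) = r * |x| ^ (r - 2) * x := by
      rw [abs_of_neg hx]
      have hne : (-x) ≠ 0 := by simpa using hx.ne
      have : (-x) ^ (r - 1) = (-x) ^ (r - 2) * (-x) := by
        rw [← Real.rpow_add_one hne]; ring_nf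
      rw [this]; ring
    rw [← h3]
    exact h1.congr_of_eventuallyEq h2
  · subst hx
    have h0 : r * |(0:ℝ)| ^ (r - 2) * 0 = 0 := by ring
    rw [h0, hasDerivAt_iff_tendsto_slope]
    apply squeeze_zero_norm' (a := fun y : ℝ => |y| ^ (r - 1))
    · filter_upwards [self_mem_nhdsWithin] with y (hy : y ≠ 0)
      have h1 : slope (fun y : ℝ => |y| ^ r) 0 y = |y| ^ r / y := by
        simp [slope_def_field, Real.zero_rpow (by linarith : r ≠ 0)]
      have habs : |y| ≠ 0 := abs_ne_zero.mpr hy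
      rw [h1, norm_div, Real.norm_eq_abs, Real.norm_eq_abs,
        abs_of_nonneg (Real.rpow_nonneg (abs_nonneg y) r),
        ← Real.rpow_sub_one habs]
    · have hc : ContinuousAt (fun y : ℝ => |y| ^ (r - 1)) 0 :=
        (Real.continuousAt_rpow_const _ _ (Or.inr (by linarith))).comp
          continuous_abs.continuousAt
      have h0' : |(0:ℝ)| ^ (r - 1) = 0 := by
        rw [abs_zero, Real.zero_rpow (by linarith)]
      have := hc.tendsto
      rw [h0'] at this
      exact this.mono_left nhdsWithin_le_nhds
  · have h1 : HasDerivAt (fun y : ℝ => y ^ r) (r * x ^ (r - 1)) x :=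
      Real.hasDerivAt_rpow_const (Or.inl hx.ne')
    have h2 : (fun y : ℝ => |y| ^ r) =ᶠ[nhds x] (fun y : ℝ => y ^ r) := by
      filter_upwards [Ioi_mem_nhds hx] with y hy
      rw [abs_of_pos hy]
    have h3 : r * x ^ (r - 1) = r * |x| ^ (r - 2) * x := by
      rw [abs_of_pos hx]
      have : x ^ (r - 1) = x ^ (r - 2) * x := by
        rw [← Real.rpow_add_one hx.ne']; ring_nf
      rw [this]; ring
    rw [← h3]
    exact h1.congr_of_eventuallyEq h2

lemma hasDerivAt_V {p : ℝ} (hp : 1 < p) (α β x : ℝ) :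
    HasDerivAt (fun t : ℝ => |(t - α) * (t - β)| ^ p / p)
      (|(x - α) * (x - β)| ^ (p - 2) * ((x - α) * (x - β)) * (2 * x - α - β)) x := by
  have hf : HasDerivAt (fun t : ℝ => (t - α) * (t - β)) ((x - β) + (x - α)) x := by
    have := ((hasDerivAt_id x).sub_const α).mul ((hasDerivAt_id x).sub_const β)
    exact this.congr_deriv (by simp only [id_eq, one_mul, mul_one])
  have := ((abs_rpow_hasDerivAt hp ((x - α) * (x - β))).comp x hf).div_const p
  have hp0 : p ≠ 0 := by linarith
  refine this.congr_deriv ?_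
  field_simp
  ring

lemma Fabs {p : ℝ} (hp : 1 < p) (v : ℝ) : |(|v| ^ (p - 2) * v)| = |v| ^ (p - 1) := by
  rcases eq_or_ne v 0 with rfl | hv
  · simp [Real.zero_rpow (by linarith : p - 1 ≠ 0)]
  · rw [abs_mul, abs_of_nonneg (Real.rpow_nonneg (abs_nonneg v) _),
      ← Real.rpow_add_one (abs_ne_zero.mpr hv)]
    ring_nf

lemma FG {p : ℝ} (hp : 1 < p) (v : ℝ) :
    |(|v| ^ (p - 2) * v)| ^ (p / (p - 1)) / (p / (p - 1)) = (p - 1) / p * |v| ^ p := by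
  have h1 : p - 1 ≠ 0 := by linarith
  have hp0 : p ≠ 0 := by linarith
  rw [Fabs hp v, ← Real.rpow_mul (abs_nonneg v)]
  have : (p - 1) * (p / (p - 1)) = p := by field_simp
  rw [this]
  rw [div_eq_mul_inv, mul_comm]
  congr 1
  field_simp

lemma Ginv {p : ℝ} (hp : 1 < p) (v : ℝ) :
    |(|v| ^ (p - 2) * v)| ^ (p / (p - 1) - 2) * (|v| ^ (p - 2) * v) = v := by
  rcases eq_or_ne v 0 with rfl | hv
  · simp
  · have h1 : p - 1 ≠ 0 := by linarith
    have habs : (0:ℝ) < |v| := abs_pos.mpr hv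
    rw [Fabs hp v, ← Real.rpow_mul (abs_nonneg v), ← mul_assoc,
      ← Real.rpow_add habs]
    have : (p - 1) * (p / (p - 1) - 2) + (p - 2) = 0 := by field_simp; ring
    rw [this, Real.rpow_zero, one_mul]

lemma gronwall_right {f f' : ℝ → ℝ} {L a : ℝ}
    (hf : ∀ t, HasDerivAt f (f' t) t) (hb : ∀ t, |f' t| ≤ L * |f t|)
    (h0 : f a = 0) : ∀ b, a ≤ b → f b = 0 := by
  intro b hab
  have key := norm_le_gronwallBound_of_norm_deriv_right_le (f := f) (f' := f')
    (δ := 0) (K := L) (ε := 0) (a := a) (b := b)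
    (fun t _ => (hf t).continuousAt.continuousWithinAt)
    (fun t _ => (hf t).hasDerivWithinAt)
    (by simp [h0])
    (fun t _ => by simpa using hb t)
  have h1 := key b ⟨hab, le_refl b⟩
  rw [gronwallBound_ε0_δ0] at h1
  have h2 : |f b| ≤ 0 := by simpa using h1
  exact abs_eq_zero.mp (le_antisymm h2 (abs_nonneg _))

lemma gronwall_zero {f f' : ℝ → ℝ} {L a : ℝ}
    (hf : ∀ t, HasDerivAt f (f' t) t) (hb : ∀ t, |f' t| ≤ L * |f t|)
    (h0 : f a = 0) : ∀ b, f b = 0 := by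
  intro b
  rcases le_total a b with hab | hba
  · exact gronwall_right hf hb h0 b hab
  · have hg : ∀ t, HasDerivAt (fun s => f (2 * a - s)) (-(f' (2 * a - t))) t := by
      intro t
      have hinner : HasDerivAt (fun s : ℝ => 2 * a - s) (-1) t := by
        exact ((hasDerivAt_const t (2 * a)).sub (hasDerivAt_id t)).congr_deriv (by simp)
      have h2 := (hf (2 * a - t)).comp t hinner
      simp only [Function.comp_def] at h2
      refine h2.congr_deriv ?_
      ring
    have hgb : ∀ t, |(-(f' (2 * a - t)))| ≤ L * |f (2 * a - t)| := by
      intro t; rw [abs_neg]; exact hb _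
    have h00 : f (2 * a - a) = 0 := by rw [show 2 * a - a = a by ring, h0]
    have h3 := gronwall_right (f := fun s => f (2 * a - s)) hg hgb h00
      (2 * a - b) (by linarith)
    rw [show 2 * a - (2 * a - b) = b by ring] at h3
    exact h3

noncomputable def efun (p α β t : ℝ) : ℝ := Real.exp ((β - α) * t / (p - 1) ^ (1/p))
noncomputable def qfun (p α β t : ℝ) : ℝ := (α + β * efun p α β t) / (1 + efun p α β t)
noncomputable def dfun (p α β t : ℝ) : ℝ :=
  (β - α) * ((β - α) / (p - 1) ^ (1/p)) * efun p α β t / (1 + efun p α β t) ^ 2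
noncomputable def d2fun (p α β t : ℝ) : ℝ :=
  (β - α) / (p - 1) ^ (1/p) * dfun p α β t * (1 - efun p α β t) / (1 + efun p α β t)

set_option linter.unusedSectionVars false
section basic
variable {p α β : ℝ} (hp : 1 < p) (hαβ : α < β)
include hp hαβ

lemma hk_pos : 0 < (p - 1) ^ (1/p : ℝ) := Real.rpow_pos_of_pos (by linarith) _

lemma hkp : ((p - 1) ^ (1/p : ℝ)) ^ (p : ℝ) = p - 1 := by
  rw [← Real.rpow_mul (by linarith : (0:ℝ) ≤ p - 1)]
  rw [one_div, inv_mul_cancel₀ (by linarith : p ≠ 0), Real.rpow_one]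

lemma he_pos (t : ℝ) : 0 < efun p α β t := Real.exp_pos _

lemma h1e_pos (t : ℝ) : 0 < 1 + efun p α β t := by
  have := he_pos hp hαβ t; linarith

lemma he_hasDerivAt (t : ℝ) :
    HasDerivAt (efun p α β) (efun p α β t * ((β - α) / (p - 1) ^ (1/p))) t := by
  have hinner : HasDerivAt (fun t : ℝ => (β - α) * t / (p - 1) ^ (1/p))
      ((β - α) / (p - 1) ^ (1/p)) t := by
    have := ((hasDerivAt_id t).const_mul (β - α)).div_const ((p - 1) ^ (1/p : ℝ))
    simpa using this
  exact (Real.hasDerivAt_exp _).comp t hinner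

lemma hq_hasDerivAt (t : ℝ) : HasDerivAt (qfun p α β) (dfun p α β t) t := by
  have he := he_hasDerivAt hp hαβ t
  have hN : HasDerivAt (fun t => α + β * efun p α β t)
      (β * (efun p α β t * ((β - α) / (p - 1) ^ (1/p)))) t := by
    exact (he.const_mul β).const_add α
  have hD : HasDerivAt (fun t => 1 + efun p α β t)
      (efun p α β t * ((β - α) / (p - 1) ^ (1/p))) t := he.const_add 1
  have h := hN.div hD (h1e_pos hp hαβ t).ne'
  refine h.congr_deriv ?_
  unfold dfun
  have h1 := (h1e_pos hp hαβ t).ne'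
  have hk := (hk_pos hp hαβ).ne'
  field_simp
  ring

lemma hd_pos (t : ℝ) : 0 < dfun p α β t := by
  unfold dfun
  have h1 := he_pos hp hαβ t
  have h2 := h1e_pos hp hαβ t
  have h3 := hk_pos hp hαβ
  have hba : (0:ℝ) < β - α := sub_pos.mpr hαβ
  exact div_pos (mul_pos (mul_pos hba (div_pos hba h3)) h1) (pow_pos h2 2)

lemma hq_deriv : deriv (qfun p α β) = dfun p α β :=
  funext fun t => (hq_hasDerivAt hp hαβ t).deriv

lemma hq_mem (t : ℝ) : α < qfun p α β t ∧ qfun p α β t < β := by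
  have he := he_pos hp hαβ t
  have h1 := h1e_pos hp hαβ t
  constructor
  · rw [qfun, lt_div_iff₀ h1]; nlinarith
  · rw [qfun, div_lt_iff₀ h1]; nlinarith

lemma hkd (t : ℝ) : (p - 1) ^ (1/p : ℝ) * dfun p α β t
    = (qfun p α β t - α) * (β - qfun p α β t) := by
  have h1 := (h1e_pos hp hαβ t).ne'
  have hk := (hk_pos hp hαβ).ne'
  unfold dfun qfun
  field_simp
  ring

lemma h2q (t : ℝ) : 2 * qfun p α β t - α - β
    = (β - α) * (efun p α β t - 1) / (1 + efun p α β t) := by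
  have h1 := (h1e_pos hp hαβ t).ne'
  unfold qfun
  field_simp
  ring

lemma hd_hasDerivAt (t : ℝ) : HasDerivAt (dfun p α β) (d2fun p α β t) t := by
  have he := he_hasDerivAt hp hαβ t
  have hN : HasDerivAt (fun t => (β - α) * ((β - α) / (p - 1) ^ (1/p)) * efun p α β t)
      ((β - α) * ((β - α) / (p - 1) ^ (1/p)) * (efun p α β t * ((β - α) / (p - 1) ^ (1/p)))) t :=
    he.const_mul _
  have hD : HasDerivAt (fun t => (1 + efun p α β t) ^ 2)
      (2 * (1 + efun p α β t) * (efun p α β t * ((β - α) / (p - 1) ^ (1/p)))) t := by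
    have := (he.const_add 1).pow 2
    exact this.congr_deriv (by ring)
  have h := hN.div hD (pow_ne_zero 2 (h1e_pos hp hαβ t).ne')
  refine h.congr_deriv ?_
  unfold d2fun dfun
  have h1 := (h1e_pos hp hαβ t).ne'
  have hk := (hk_pos hp hαβ).ne'
  field_simp
  ring
end basic

section basic2
variable {p α β : ℝ} (hp : 1 < p) (hαβ : α < β)
include hp hαβ

lemma hq0 : qfun p α β 0 = (α + β) / 2 := by
  unfold qfun efun
  simp
  ring

lemma hkp1 : ((p - 1) ^ (1/p : ℝ)) ^ (p - 1 : ℝ) = (p - 1) / (p - 1) ^ (1/p : ℝ) := by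
  rw [show (p - 1 : ℝ) = p - (1:ℝ) from rfl, Real.rpow_sub (hk_pos hp hαβ), hkp hp hαβ,
    Real.rpow_one]

lemma hkp2 : ((p - 1) ^ (1/p : ℝ)) ^ (p - 2 : ℝ) = (p - 1) / ((p - 1) ^ (1/p : ℝ)) ^ 2 := by
  rw [show (p - 2 : ℝ) = p - (2:ℝ) from rfl, Real.rpow_sub (hk_pos hp hαβ), hkp hp hαβ,
    Real.rpow_two]

lemma hVq (t : ℝ) :
    deriv (fun x : ℝ => |(x - α) * (x - β)| ^ p / p) (qfun p α β t)
      = (p - 1) * dfun p α β t ^ (p - 2 : ℝ) * d2fun p α β t := by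
  rw [(hasDerivAt_V hp α β (qfun p α β t)).deriv]
  set k := ((p - 1) ^ (1/p : ℝ)) with hkdef
  set q := qfun p α β t
  set d := dfun p α β t
  set e := efun p α β t
  have hk := hk_pos hp hαβ
  have hd := hd_pos hp hαβ t
  have h1e := h1e_pos hp hαβ t
  have hfq : (q - α) * (q - β) = -(k * d) := by
    have := hkd hp hαβ t
    nlinarith [this]
  have habs : |(q - α) * (q - β)| = k * d := by
    rw [hfq, abs_neg, abs_of_pos (mul_pos hk hd)]
  rw [habs, hfq, h2q hp hαβ t, d2fun]
  rw [Real.mul_rpow hk.le hd.le, hkp2 hp hαβ]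
  have h1e' : (1 + e) ≠ 0 := h1e.ne'
  field_simp
  ring

lemma hd2_eq_derivV (t : ℝ) :
    HasDerivAt (fun s => dfun p α β s ^ (p - 1 : ℝ))
      (deriv (fun x : ℝ => |(x - α) * (x - β)| ^ p / p) (qfun p α β t)) t := by
  rw [hVq hp hαβ t]
  have h := (hd_hasDerivAt hp hαβ t).rpow_const (p := p - 1) (Or.inl (hd_pos hp hαβ t).ne')
  rw [show (p - 1 - 1 : ℝ) = p - 2 by ring] at h
  convert h using 1
  ring

lemma hq_atTop : Tendsto (qfun p α β) atTop (nhds β) := by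
  have hqeq : qfun p α β = fun t => β - (β - α) * (1 + efun p α β t)⁻¹ := by
    funext t
    have h1 := (h1e_pos hp hαβ t).ne'
    rw [qfun, eq_sub_iff_add_eq, div_add' _ _ _ h1]
    field_simp
    ring
  rw [hqeq]
  have hc : (0:ℝ) < (β - α) / (p - 1) ^ (1/p : ℝ) :=
    div_pos (sub_pos.mpr hαβ) (hk_pos hp hαβ)
  have hinner : Tendsto (fun t : ℝ => (β - α) * t / (p - 1) ^ (1/p : ℝ)) atTop atTop := by
    have := Tendsto.atTop_mul_const hc (tendsto_id (α := ℝ))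
    refine this.congr fun t => ?_
    simp [id]; ring
  have hee : Tendsto (efun p α β) atTop atTop := Real.tendsto_exp_atTop.comp hinner
  have h2 : Tendsto (fun t => (1 + efun p α β t)⁻¹) atTop (nhds 0) :=
    (tendsto_atTop_add_const_left _ 1 hee).inv_tendsto_atTop
  have h3 := (h2.const_mul (β - α)).const_sub β
  simpa using h3

lemma hq_atBot : Tendsto (qfun p α β) atBot (nhds α) := by
  have hc : (0:ℝ) < (β - α) / (p - 1) ^ (1/p : ℝ) :=
    div_pos (sub_pos.mpr hαβ) (hk_pos hp hαβ)
  have hinner : Tendsto (fun t : ℝ => (β - α) * t / (p - 1) ^ (1/p : ℝ)) atBot atBot := by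
    have := Tendsto.atBot_mul_const hc (tendsto_id (α := ℝ))
    refine this.congr fun t => ?_
    simp [id]; ring
  have hee : Tendsto (efun p α β) atBot (nhds 0) := Real.tendsto_exp_atBot.comp hinner
  have hN : Tendsto (fun t => α + β * efun p α β t) atBot (nhds (α + β * 0)) :=
    (hee.const_mul β).const_add α
  have hD : Tendsto (fun t => 1 + efun p α β t) atBot (nhds (1 + 0)) := hee.const_add 1
  have := hN.div hD (by norm_num)
  have h0 : (α + β * 0) / (1 + 0) = α := by simp
  rw [h0] at this
  exact this

end basic2

lemma abs_rpow_div_hasDerivAt {r : ℝ} (hr : 1 < r) (x : ℝ) :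
    HasDerivAt (fun y : ℝ => |y| ^ r / r) (|x| ^ (r - 2) * x) x := by
  have h := (abs_rpow_hasDerivAt hr x).div_const r
  refine h.congr_deriv ?_
  field_simp

lemma bounded_of_tendsto {u : ℝ → ℝ} {a b : ℝ} (hc : Continuous u)
    (h1 : Tendsto u atBot (nhds a)) (h2 : Tendsto u atTop (nhds b)) :
    ∃ M : ℝ, ∀ t, |u t| ≤ M := by
  have h2' : ∀ᶠ t in atTop, dist (u t) b < 1 := h2 (Metric.ball_mem_nhds b one_pos)
  have h1' : ∀ᶠ t in atBot, dist (u t) a < 1 := h1 (Metric.ball_mem_nhds a one_pos)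
  obtain ⟨T2, hT2⟩ := eventually_atTop.mp h2'
  obtain ⟨T1, hT1⟩ := eventually_atBot.mp h1'
  obtain ⟨C, hC⟩ := (isCompact_Icc (a := T1) (b := T2)).exists_bound_of_continuousOn
    hc.continuousOn
  refine ⟨max C (max (|a| + 1) (|b| + 1)), fun t => ?_⟩
  rcases le_total t T1 with h | h
  · have := hT1 t h
    rw [Real.dist_eq] at this
    have : |u t| ≤ |a| + 1 := by
      have := abs_sub_abs_le_abs_sub (u t) a
      linarith
    exact le_trans this (le_trans (le_max_left _ _) (le_max_right _ _))
  rcases le_total t T2 with h' | h'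
  · exact le_trans (hC t ⟨h, h'⟩) (le_max_left _ _)
  · have := hT2 t h'
    rw [Real.dist_eq] at this
    have : |u t| ≤ |b| + 1 := by
      have := abs_sub_abs_le_abs_sub (u t) b
      linarith
    exact le_trans this (le_trans (le_max_right _ _) (le_max_right _ _))

lemma uniqueness {p α β : ℝ} (hp : 1 < p) (hαβ : α < β) (u : ℝ → ℝ)
    (hu : IsHeteroclinicAB (fun t : ℝ => t ^ (p - 2))
      (fun t : ℝ => |(t - α) * (t - β)| ^ p / p) α β u) :
    ∀ t, u t = qfun p α β t := by
  obtain ⟨⟨hdiff, hODE⟩, hdd, hdc, hu0, hubot, hutop⟩ := hu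
  set V : ℝ → ℝ := fun x : ℝ => |(x - α) * (x - β)| ^ p / p with hVdef
  set D : ℝ → ℝ := deriv u with hDdef
  set k : ℝ := (p - 1) ^ (1/p : ℝ) with hkdef
  have hk : 0 < k := hk_pos hp hαβ
  have hp1 : (0:ℝ) < p - 1 := by linarith
  have hp0 : p ≠ 0 := by linarith
  -- Step A : rewrite the ODE
  have hODE' : ∀ t, HasDerivAt (fun s => |D s| ^ (p - 2) * D s) (deriv V (u t)) t := by
    intro t
    have h := hODE t
    have hfun : (fun s => if D s = 0 then 0 else |D s| ^ (p - 2) * D s)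
        = fun s => |D s| ^ (p - 2) * D s := by
      funext s
      split_ifs with hs
      · rw [hs, mul_zero]
      · rfl
    rwa [hfun] at h
  -- Step B : derivative of V
  have hV : ∀ x, HasDerivAt V
      (|(x - α) * (x - β)| ^ (p - 2) * ((x - α) * (x - β)) * (2 * x - α - β)) x :=
    fun x => hasDerivAt_V hp α β x
  have hderivV : ∀ x, deriv V x
      = |(x - α) * (x - β)| ^ (p - 2) * ((x - α) * (x - β)) * (2 * x - α - β) :=
    fun x => (hV x).deriv
  -- Step C : energy is constant
  set r : ℝ := p / (p - 1) with hrdef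
  have hr : 1 < r := by
    rw [hrdef, lt_div_iff₀ hp1]; linarith
  set E : ℝ → ℝ := fun t => |(|D t| ^ (p - 2) * D t)| ^ r / r - V (u t) with hEdef
  have hE : ∀ t, HasDerivAt E 0 t := by
    intro t
    have first := (abs_rpow_div_hasDerivAt hr (|D t| ^ (p - 2) * D t)).comp t (hODE' t)
    have second := (hV (u t)).comp t ((hdiff t).hasDerivAt)
    have h := first.sub second
    refine h.congr_deriv ?_
    rw [show |(|D t| ^ (p - 2) * D t)| ^ (r - 2) * (|D t| ^ (p - 2) * D t) = D t
      from Ginv hp (D t), hderivV (u t)]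
    ring
  have hEconst : ∀ t, E t = E 0 := fun t =>
    is_const_of_deriv_eq_zero (fun s => (hE s).differentiableAt) (fun s => (hE s).deriv) t 0
  have hEeq : ∀ t, E t = (p - 1) / p * |D t| ^ p - V (u t) := by
    intro t
    rw [hEdef]
    simp only []
    rw [show (|(|D t| ^ (p - 2) * D t)| ^ r / r : ℝ)
      = (p - 1) / p * |D t| ^ p from FG hp (D t)]
  -- Step D : E 0 = 0
  have hVcont : Continuous V := by
    apply Continuous.div_const
    apply Continuous.rpow_const
    · exact continuous_abs.comp ((continuous_id.sub continuous_const).mul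
        (continuous_id.sub continuous_const))
    · exact fun x => Or.inr (by linarith)
  have hVβ : V β = 0 := by
    rw [hVdef]
    simp [Real.zero_rpow hp0]
  have hVu_top : Tendsto (fun t => V (u t)) atTop (nhds 0) := by
    have := hVcont.continuousAt.tendsto.comp hutop
    rwa [hVβ] at this
  set m : ℝ := E 0 * (p / (p - 1)) with hmdef
  have hDp : Tendsto (fun t => |D t| ^ p) atTop (nhds m) := by
    have h1 := (hVu_top.const_add (E 0)).mul_const (p / (p - 1))
    have h2 : ∀ t, (E 0 + V (u t)) * (p / (p - 1)) = |D t| ^ p := by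
      intro t
      have := (hEconst t).symm
      rw [hEeq t] at this
      field_simp at this ⊢
      linarith
    have h3 := h1.congr h2
    simpa using h3
  have hm0 : 0 ≤ m := ge_of_tendsto hDp
    (Eventually.of_forall fun t => Real.rpow_nonneg (abs_nonneg _) p)
  have hmzero : m = 0 := by
    by_contra hm
    have hmpos : 0 < m := lt_of_le_of_ne hm0 (Ne.symm hm)
    set ℓ : ℝ := m ^ (1/p : ℝ) with hldef
    have hlpos : 0 < ℓ := Real.rpow_pos_of_pos hmpos _
    have hDl : Tendsto (fun t => |D t|) atTop (nhds ℓ) := by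
      have hcont : ContinuousAt (fun x : ℝ => x ^ (1/p : ℝ)) m :=
        Real.continuousAt_rpow_const m _ (Or.inl hmpos.ne')
      have := hcont.tendsto.comp hDp
      refine this.congr fun t => ?_
      simp only [Function.comp]
      rw [← Real.rpow_mul (abs_nonneg _), mul_one_div, div_self hp0, Real.rpow_one]
    have hev : ∀ᶠ t in atTop, ℓ / 2 < |D t| :=
      hDl.eventually (eventually_gt_nhds (by linarith))
    obtain ⟨T, hT⟩ := eventually_atTop.mp hev
    have hDne : ∀ t, T ≤ t → D t ≠ 0 := by
      intro t ht h0
      have := hT t ht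
      rw [h0, abs_zero] at this
      linarith
    have hFTC : ∀ t, T ≤ t → u t - u T = ∫ s in T..t, D s := by
      intro t ht
      rw [intervalIntegral.integral_deriv_eq_sub (fun x _ => hdiff x)
        (hdc.intervalIntegrable T t)]
    rcases (hDne T le_rfl).lt_or_gt with hneg | hpos
    · -- D is eventually ≤ -ℓ/2
      have hall : ∀ t, T ≤ t → D t ≤ -(ℓ/2) := by
        intro t ht
        rcases le_or_gt (D t) (-(ℓ/2)) with h | h
        · exact h
        · exfalso
          have hDt : ℓ/2 < D t := by
            rcases abs_cases (D t) with ⟨he, _⟩ | ⟨he, _⟩ <;> linarith [hT t ht]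
          obtain ⟨s, hs, hs0⟩ := intermediate_value_uIcc (a := T) (b := t)
            (hdc.continuousOn) (show (0:ℝ) ∈ uIcc (D T) (D t) from by
              rw [Set.mem_uIcc]; left; constructor <;> linarith)
          rw [uIcc_of_le ht] at hs
          exact hDne s hs.1 hs0
      have hbnd : ∀ t, T ≤ t → u t ≤ u T + (t - T) * (-(ℓ/2)) := by
        intro t ht
        have h1 := hFTC t ht
        have h2 : (∫ s in T..t, D s) ≤ (t - T) * (-(ℓ/2)) := by
          have := intervalIntegral.integral_mono_on ht (hdc.intervalIntegrable T t)
            (intervalIntegrable_const (μ := MeasureTheory.volume)) (fun x hx => hall x hx.1)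
          simp only [intervalIntegral.integral_const, smul_eq_mul] at this
          linarith
        linarith
      have hgoesbot : Tendsto (fun t => u T + (t - T) * (-(ℓ/2))) atTop atBot := by
        apply tendsto_atBot_add_const_left
        exact (tendsto_atTop_add_const_right _ (-T) tendsto_id).atTop_mul_const_of_neg
          (by linarith)
      have hub : Tendsto u atTop atBot :=
        tendsto_atBot_mono' atTop (eventually_atTop.mpr ⟨T, hbnd⟩) hgoesbot
      exact (not_tendsto_nhds_of_tendsto_atBot hub β) hutop
    · have hall : ∀ t, T ≤ t → ℓ/2 ≤ D t := by
        intro t ht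
        rcases le_or_gt (ℓ/2) (D t) with h | h
        · exact h
        · exfalso
          have hDt : D t < -(ℓ/2) := by
            rcases abs_cases (D t) with ⟨he, _⟩ | ⟨he, _⟩ <;> linarith [hT t ht]
          obtain ⟨s, hs, hs0⟩ := intermediate_value_uIcc (a := T) (b := t)
            (hdc.continuousOn) (show (0:ℝ) ∈ uIcc (D T) (D t) from by
              rw [Set.mem_uIcc]; right; constructor <;> linarith)
          rw [uIcc_of_le ht] at hs
          exact hDne s hs.1 hs0
      have hbnd : ∀ t, T ≤ t → u T + (t - T) * (ℓ/2) ≤ u t := by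
        intro t ht
        have h1 := hFTC t ht
        have h2 : (t - T) * (ℓ/2) ≤ ∫ s in T..t, D s := by
          have := intervalIntegral.integral_mono_on ht
            (intervalIntegrable_const (μ := MeasureTheory.volume)) (hdc.intervalIntegrable T t)
            (fun x hx => hall x hx.1)
          simp only [intervalIntegral.integral_const, smul_eq_mul] at this
          linarith
        linarith
      have hgoestop : Tendsto (fun t => u T + (t - T) * (ℓ/2)) atTop atTop := by
        apply tendsto_atTop_add_const_left
        exact (tendsto_atTop_add_const_right _ (-T) tendsto_id).atTop_mul_const
          (by linarith)
      have hub : Tendsto u atTop atTop :=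
        tendsto_atTop_mono' atTop (eventually_atTop.mpr ⟨T, hbnd⟩) hgoestop
      exact (not_tendsto_nhds_of_tendsto_atTop hub β) hutop
  have hE00 : E 0 = 0 := by
    have : E 0 * (p / (p - 1)) = 0 := by rw [← hmdef, hmzero]
    have hpp : p / (p - 1) ≠ 0 := by positivity
    exact (mul_eq_zero.mp this).resolve_right hpp
  -- Step E : pointwise energy identity
  have hDEabs : ∀ t, |D t| = |(u t - α) * (u t - β)| / k := by
    intro t
    have h1 : E t = 0 := by rw [hEconst t, hE00]
    rw [hEeq t] at h1
    have h2 : |D t| ^ p = (|(u t - α) * (u t - β)| / k) ^ p := by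
      rw [Real.div_rpow (abs_nonneg _) hk.le, hkdef, hkp hp hαβ]
      simp only [hVdef] at h1
      field_simp at h1 ⊢
      linarith
    exact Real.rpow_left_injOn hp0 (abs_nonneg (D t))
      (div_nonneg (abs_nonneg _) hk.le) h2
  -- Step F : u never equals α or β
  obtain ⟨M, hM⟩ := bounded_of_tendsto hdiff.continuous hubot hutop
  have hbound : ∀ (c : ℝ), ∀ t, |D t| ≤ ((M + |c|) / k) * |u t - (α + β - c)| → True := fun _ _ _ => trivial
  have huneβ : ∀ t, u t ≠ β := by
    intro t2 ht2
    have hgr : ∀ b, u b - β = 0 := by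
      refine gronwall_zero (f' := D) (L := (M + |α|) / k) (a := t2)
        (fun s => (hdiff s).hasDerivAt.sub_const β) ?_ (by rw [ht2, sub_self])
      intro s
      have h1 : |u s - α| ≤ M + |α| := le_trans (abs_sub _ _) (by linarith [hM s])
      calc |D s| = |u s - α| * |u s - β| / k := by rw [hDEabs s, abs_mul]
        _ ≤ (M + |α|) * |u s - β| / k := by gcongr
        _ = (M + |α|) / k * |u s - β| := by ring
    have := hgr 0
    rw [hu0] at this
    have : α = β := by linarith
    exact absurd this hαβ.ne
  have huneα : ∀ t, u t ≠ α := by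
    intro t2 ht2
    have hgr : ∀ b, u b - α = 0 := by
      refine gronwall_zero (f' := D) (L := (M + |β|) / k) (a := t2)
        (fun s => (hdiff s).hasDerivAt.sub_const α) ?_ (by rw [ht2, sub_self])
      intro s
      have h1 : |u s - β| ≤ M + |β| := le_trans (abs_sub _ _) (by linarith [hM s])
      calc |D s| = |u s - α| * |u s - β| / k := by rw [hDEabs s, abs_mul]
        _ = |u s - β| * |u s - α| / k := by ring
        _ ≤ (M + |β|) * |u s - α| / k := by gcongr
        _ = (M + |β|) / k * |u s - α| := by ring
    have := hgr 0
    rw [hu0] at this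
    have : α = β := by linarith
    exact absurd this hαβ.ne
  -- Step G : α < u t < β
  have hcontu : Continuous u := hdiff.continuous
  have hu0b : u 0 < β := by rw [hu0]; linarith
  have hu0a : α < u 0 := by rw [hu0]; linarith
  have humem : ∀ t, α < u t ∧ u t < β := by
    intro t
    constructor
    · rcases lt_or_ge α (u t) with h | h
      · exact h
      · exfalso
        have : α ∈ uIcc (u 0) (u t) := by
          rw [Set.mem_uIcc]; right; exact ⟨h, hu0a.le⟩
        obtain ⟨s, _, hs⟩ := intermediate_value_uIcc (a := (0:ℝ)) (b := t)
          hcontu.continuousOn this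
        exact huneα s hs
    · rcases lt_or_ge (u t) β with h | h
      · exact h
      · exfalso
        have : β ∈ uIcc (u 0) (u t) := by
          rw [Set.mem_uIcc]; left; exact ⟨hu0b.le, h⟩
        obtain ⟨s, _, hs⟩ := intermediate_value_uIcc (a := (0:ℝ)) (b := t)
          hcontu.continuousOn this
        exact huneβ s hs
  -- Step H : D is positive
  have hDne0 : ∀ t, D t ≠ 0 := by
    intro t h0
    have h1 := hDEabs t
    rw [h0, abs_zero] at h1
    have h2 : |(u t - α) * (u t - β)| = 0 := by
      field_simp at h1
      exact h1.symm.trans (zero_mul k)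
    rcases mul_eq_zero.mp (abs_eq_zero.mp h2) with h | h
    · exact huneα t (by linarith [sub_eq_zero.mp h])
    · exact huneβ t (by linarith [sub_eq_zero.mp h])
  have hDpos : ∀ t, 0 < D t := by
    rcases (hDne0 0).lt_or_gt with hneg | hpos
    · exfalso
      have hallneg : ∀ t, D t < 0 := by
        intro t
        rcases (hDne0 t).lt_or_gt with h | h
        · exact h
        · exfalso
          obtain ⟨s, _, hs⟩ := intermediate_value_uIcc (a := (0:ℝ)) (b := t)
            (hdc.continuousOn) (show (0:ℝ) ∈ uIcc (D 0) (D t) from by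
              rw [Set.mem_uIcc]; left; exact ⟨hneg.le, h.le⟩)
          exact hDne0 s hs
      have hanti : StrictAnti u := strictAnti_of_deriv_neg hallneg
      have h1 : ∀ t ≥ (1:ℝ), u t ≤ u 1 := fun t ht => hanti.antitone ht
      have hb := le_of_tendsto hutop (eventually_atTop.mpr ⟨1, h1⟩)
      have h2 : u 1 < u 0 := hanti zero_lt_one
      rw [hu0] at h2
      linarith
    · intro t
      rcases (hDne0 t).lt_or_gt with h | h
      · exfalso
        obtain ⟨s, _, hs⟩ := intermediate_value_uIcc (a := (0:ℝ)) (b := t)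
          (hdc.continuousOn) (show (0:ℝ) ∈ uIcc (D 0) (D t) from by
            rw [Set.mem_uIcc]; right; exact ⟨h.le, hpos.le⟩)
        exact hDne0 s hs
      · exact h
  -- Step I : final Gronwall comparison with q
  have hdq : ∀ t, dfun p α β t = (qfun p α β t - α) * (β - qfun p α β t) / k := by
    intro t
    have := hkd hp hαβ t
    rw [eq_div_iff hk.ne']
    linarith [this]
  have hDval : ∀ t, D t = (u t - α) * (β - u t) / k := by
    intro t
    have h1 := (humem t).1
    have h2 := (humem t).2
    have habs : |(u t - α) * (u t - β)| = (u t - α) * (β - u t) := by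
      rw [abs_mul, abs_of_pos (by linarith : (0:ℝ) < u t - α),
        abs_of_neg (by linarith : u t - β < 0)]
      ring
    rw [← abs_of_pos (hDpos t), hDEabs t, habs]
  have hfinal : ∀ b, u b - qfun p α β b = 0 := by
    refine gronwall_zero (f' := fun t => D t - dfun p α β t) (L := (β - α) / k) (a := 0)
      (fun t => (hdiff t).hasDerivAt.sub (hq_hasDerivAt hp hαβ t)) ?_
      (by rw [hu0, hq0 hp hαβ, sub_self])
    intro t
    have hqm := hq_mem hp hαβ t
    have hum := humem t
    have key : D t - dfun p α β t
        = (u t - qfun p α β t) * (α + β - u t - qfun p α β t) / k := by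
      rw [hDval t, hdq t]
      field_simp
      ring
    have habs2 : |α + β - u t - qfun p α β t| ≤ β - α := by
      rw [abs_le]
      constructor <;> [linarith [hum.2, hqm.2]; linarith [hum.1, hqm.1]]
    calc |D t - dfun p α β t| = |u t - qfun p α β t| * |α + β - u t - qfun p α β t| / k := by
          rw [key, abs_div, abs_mul, abs_of_pos hk]
      _ ≤ |u t - qfun p α β t| * (β - α) / k := by gcongr
      _ = (β - α) / k * |u t - qfun p α β t| := by ring
  intro t
  have := hfinal t
  linarith
lemma existence {p α β : ℝ} (hp : 1 < p) (hαβ : α < β) :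
    IsHeteroclinicAB (fun t : ℝ => t ^ (p - 2))
      (fun t : ℝ => |(t - α) * (t - β)| ^ p / p) α β (qfun p α β) := by
  refine ⟨⟨fun t => (hq_hasDerivAt hp hαβ t).differentiableAt, ?_⟩, ?_, ?_,
    hq0 hp hαβ, hq_atBot hp hαβ, hq_atTop hp hαβ⟩
  · intro t
    refine (hd2_eq_derivV hp hαβ t).congr_of_eventuallyEq
      (Eventually.of_forall fun s => ?_)
    rw [hq_deriv hp hαβ]
    have hd := hd_pos hp hαβ s
    show (if dfun p α β s = 0 then 0 else |dfun p α β s| ^ (p - 2) * dfun p α β s)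
      = dfun p α β s ^ (p - 1 : ℝ)
    rw [if_neg hd.ne']
    rw [abs_of_pos hd, ← Real.rpow_add_one hd.ne',
      show (p - 2 + 1 : ℝ) = p - 1 by ring]
  · rw [hq_deriv hp hαβ]
    exact fun t => (hd_hasDerivAt hp hαβ t).differentiableAt
  · rw [hq_deriv hp hαβ]
    exact continuous_iff_continuousAt.mpr fun t => (hd_hasDerivAt hp hαβ t).continuousAt


theorem statement8 (p α β : ℝ) (hp : 1 < p) (hαβ : α < β) :
    IsHeteroclinicAB (fun t : ℝ => t ^ (p - 2))
      (fun t : ℝ => |(t - α) * (t - β)| ^ p / p) α β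
      (fun t : ℝ => (α + β * Real.exp ((β - α) * t / (p - 1) ^ (1 / p))) /
        (1 + Real.exp ((β - α) * t / (p - 1) ^ (1 / p)))) ∧
    ∀ u : ℝ → ℝ,
      IsHeteroclinicAB (fun t : ℝ => t ^ (p - 2))
        (fun t : ℝ => |(t - α) * (t - β)| ^ p / p) α β u →
      u = fun t : ℝ => (α + β * Real.exp ((β - α) * t / (p - 1) ^ (1 / p))) /
        (1 + Real.exp ((β - α) * t / (p - 1) ^ (1 / p))) := by
  constructor
  · exact existence hp hαβ
  · intro u hu
    funext t
    exact uniqueness hp hαβ u hu t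
end

section
/- Let α > 0 and V ∈ C²(ℝ,ℝ) with V ≥ 0, V(α) = V(−α) = 0, V(t) > 0 for t ∈ (−α,α), V''(−α) > 0, V''(α) > 0, and suppose there exist d₁,d₂,d₃,d₄ > 0 with −d₁ t|t−α| ≤ V'(t) ≤ −d₂ t|t−α| for t ∈ [0,α] and −d₃ t|t+α| ≤ V'(t) ≤ −d₄ t|t+α| for t ∈ [−α,0]. If the problem −(u'/√(1+(u')²))' + V'(u) = 0 on ℝ, u(0) = 0, u(t) → ±α as t → ±∞, has a twice differentiable solution with continuous derivative, then this solution is unique: any two such solutions coincide. -/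
open Real Filter Set MeasureTheory

def IsMCHeteroclinic (V : ℝ → ℝ) (α : ℝ) (q : ℝ → ℝ) : Prop :=
  Differentiable ℝ q ∧
  (∀ t : ℝ, HasDerivAt (fun s => deriv q s / Real.sqrt (1 + (deriv q s) ^ 2))
    (deriv V (q t)) t) ∧
  Differentiable ℝ (deriv q) ∧ Continuous (deriv q) ∧ q 0 = 0 ∧
  Tendsto q atTop (nhds α) ∧ Tendsto q atBot (nhds (-α))

lemma aux_one_sub_sq (x : ℝ) : 1 - (x / Real.sqrt (1+x^2))^2 = (1+x^2)⁻¹ := by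
  have h : (0:ℝ) < 1 + x^2 := by positivity
  rw [div_pow, Real.sq_sqrt h.le]
  field_simp
  ring

lemma aux_sqrt_one_sub (x : ℝ) :
    Real.sqrt (1 - (x / Real.sqrt (1+x^2))^2) = (Real.sqrt (1+x^2))⁻¹ := by
  rw [aux_one_sub_sq, Real.sqrt_inv]

lemma aux_div (x : ℝ) :
    (x / Real.sqrt (1+x^2)) / Real.sqrt (1 - (x / Real.sqrt (1+x^2))^2) = x := by
  rw [aux_sqrt_one_sub]
  have hs : Real.sqrt (1+x^2) ≠ 0 := by positivity
  field_simp

lemma energy_const (V q : ℝ → ℝ) (hVdiff : Differentiable ℝ V)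
    (hqd : Differentiable ℝ q)
    (hode : ∀ t : ℝ, HasDerivAt (fun s => deriv q s / Real.sqrt (1 + (deriv q s) ^ 2))
      (deriv V (q t)) t) :
    ∀ t : ℝ, (Real.sqrt (1 + (deriv q t)^2))⁻¹ + V (q t)
      = (Real.sqrt (1 + (deriv q 0)^2))⁻¹ + V (q 0) := by
  set w : ℝ → ℝ := fun s => deriv q s / Real.sqrt (1 + (deriv q s) ^ 2) with hw
  set E : ℝ → ℝ := fun t => Real.sqrt (1 - w t ^ 2) + V (q t) with hE
  have hEd : ∀ t, HasDerivAt E 0 t := by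
    intro t
    have hq't : HasDerivAt q (deriv q t) t := (hqd t).hasDerivAt
    have hVq : HasDerivAt V (deriv V (q t)) (q t) := (hVdiff (q t)).hasDerivAt
    have h1 : HasDerivAt (fun t => 1 - w t ^ 2)
        (0 - 2 * w t ^ 1 * deriv V (q t)) t :=
      (hasDerivAt_const t (1:ℝ)).sub ((hode t).pow 2)
    have hwpos : 0 < 1 - w t ^ 2 := by
      rw [hw]; simp only [aux_one_sub_sq]; positivity
    have h2 := h1.sqrt hwpos.ne'
    have h3 := hVq.comp t hq't
    have h4 := h2.add h3
    have key : (0 - 2 * w t ^ 1 * deriv V (q t)) / (2 * Real.sqrt (1 - w t ^ 2))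
        + deriv V (q t) * deriv q t = 0 := by
      have hs : Real.sqrt (1 - w t ^ 2) ≠ 0 := by positivity
      have hdiv : w t / Real.sqrt (1 - w t ^ 2) = deriv q t := aux_div (deriv q t)
      have : (0 - 2 * w t ^ 1 * deriv V (q t)) / (2 * Real.sqrt (1 - w t ^ 2))
          = -(deriv V (q t) * (w t / Real.sqrt (1 - w t ^ 2))) := by
        field_simp; ring
      rw [this, hdiv]; ring
    rw [← key]
    exact h4.congr_deriv rfl |>.congr_of_eventuallyEq (by
      filter_upwards with s
      simp [E, Function.comp])
  have hconst : ∀ t, E t = E 0 := fun t =>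
    is_const_of_deriv_eq_zero (fun s => (hEd s).differentiableAt)
      (fun s => (hEd s).deriv) t 0
  intro t
  have := hconst t
  simpa only [hE, hw, aux_sqrt_one_sub] using this

lemma energy_one (V q : ℝ → ℝ) (α : ℝ) (hVcont : Continuous V) (hVα : V α = 0)
    (hqd : Differentiable ℝ q)
    (htop : Tendsto q atTop (nhds α))
    (hconst : ∀ t : ℝ, (Real.sqrt (1 + (deriv q t)^2))⁻¹ + V (q t)
      = (Real.sqrt (1 + (deriv q 0)^2))⁻¹ + V (q 0)) :
    ∀ t : ℝ, (Real.sqrt (1 + (deriv q t)^2))⁻¹ + V (q t) = 1 := by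
  have hseq : ∀ n : ℕ, ∃ c ∈ Ioo (n:ℝ) (n+1), deriv q c = (q (n+1) - q n) / ((n+1) - n) :=
    fun n => exists_deriv_eq_slope q (by linarith) (hqd.continuous.continuousOn)
      (hqd.differentiableOn)
  choose c hc hc' using hseq
  have hcn : Tendsto c atTop atTop :=
    tendsto_atTop_mono (fun n => (hc n).1.le) tendsto_natCast_atTop_atTop
  have h1 : Tendsto (fun n => q (c n)) atTop (nhds α) := htop.comp hcn
  have h2 : Tendsto (fun n => deriv q (c n)) atTop (nhds 0) := by
    have ha : Tendsto (fun n : ℕ => q ((n:ℝ)+1)) atTop (nhds α) :=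
      htop.comp (tendsto_atTop_add_const_right _ 1 tendsto_natCast_atTop_atTop)
    have hb : Tendsto (fun n : ℕ => q (n:ℝ)) atTop (nhds α) :=
      htop.comp tendsto_natCast_atTop_atTop
    have := ha.sub hb
    rw [sub_self] at this
    refine this.congr (fun n => ?_)
    rw [hc' n]; field_simp; ring
  have hcont1 : Continuous fun x : ℝ => (Real.sqrt (1 + x^2))⁻¹ := by
    apply Continuous.inv₀
    · exact (continuous_const.add (continuous_pow 2)).sqrt
    · intro x; positivity
  have h3 : Tendsto (fun n => (Real.sqrt (1 + (deriv q (c n))^2))⁻¹ + V (q (c n)))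
      atTop (nhds 1) := by
    have t1 : Tendsto (fun n => (Real.sqrt (1 + (deriv q (c n))^2))⁻¹) atTop
        (nhds ((Real.sqrt (1 + (0:ℝ)^2))⁻¹)) := (hcont1.tendsto 0).comp h2
    have t2 : Tendsto (fun n => V (q (c n))) atTop (nhds (V α)) := (hVcont.tendsto α).comp h1
    have := t1.add t2
    norm_num [hVα] at this
    exact this
  have h4 : Tendsto (fun _ : ℕ => (Real.sqrt (1 + (deriv q 0)^2))⁻¹ + V (q 0))
      atTop (nhds ((Real.sqrt (1 + (deriv q 0)^2))⁻¹ + V (q 0))) := tendsto_const_nhds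
  have h5 : (Real.sqrt (1 + (deriv q 0)^2))⁻¹ + V (q 0) = 1 := by
    refine tendsto_nhds_unique (h3.congr (fun n => ?_)) h4 |>.symm
    exact (hconst (c n)).symm ▸ rfl
  intro t; rw [hconst t, h5]

lemma deriv_zero_of_energy (q : ℝ → ℝ) (t₁ : ℝ) (h : (Real.sqrt (1 + (deriv q t₁)^2))⁻¹ = 1) :
    deriv q t₁ = 0 := by
  have h2 : Real.sqrt (1 + (deriv q t₁)^2) = 1 := by
    have hs : Real.sqrt (1 + (deriv q t₁)^2) ≠ 0 := by positivity
    field_simp at h; linarith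
  have h3 : (1 : ℝ) + (deriv q t₁)^2 = 1 := by
    have := Real.sq_sqrt (by positivity : (0:ℝ) ≤ 1 + (deriv q t₁)^2)
    rw [h2] at this; simpa using this.symm
  nlinarith [sq_nonneg (deriv q t₁)]

lemma no_touch (V q : ℝ → ℝ) (β : ℝ) (hV'C1 : ContDiff ℝ 1 (deriv V))
    (hVβ : V β = 0) (hV'β : deriv V β = 0)
    (hqd : Differentiable ℝ q) (hq'c : Continuous (deriv q))
    (hode : ∀ t : ℝ, HasDerivAt (fun s => deriv q s / Real.sqrt (1 + (deriv q s) ^ 2))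
      (deriv V (q t)) t)
    (hen : ∀ t : ℝ, (Real.sqrt (1 + (deriv q t)^2))⁻¹ + V (q t) = 1)
    (hq0 : q 0 ≠ β) : ∀ t, q t ≠ β := by
  set w : ℝ → ℝ := fun s => deriv q s / Real.sqrt (1 + (deriv q s) ^ 2) with hwdef
  set x : ℝ → ℝ × ℝ := fun t => (q t, w t) with hxdef
  set vf : ℝ × ℝ → ℝ × ℝ := fun z => (z.2 / Real.sqrt (1 - z.2^2), deriv V z.1) with hvdef
  have hwcont : Continuous w := by
    apply hq'c.div ((continuous_const.add (hq'c.pow 2)).sqrt)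
    intro t; exact (Real.sqrt_pos.mpr (by nlinarith [sq_nonneg (deriv q t)] : (0:ℝ) < 1 + deriv q t ^ 2)).ne'
  have hxcont : Continuous x := hqd.continuous.prodMk hwcont
  have hxode : ∀ t, HasDerivAt x (vf (x t)) t := by
    intro t
    have h1 : HasDerivAt q (deriv q t) t := (hqd t).hasDerivAt
    have h2 : HasDerivAt w (deriv V (q t)) t := hode t
    have h3 : HasDerivAt x (deriv q t, deriv V (q t)) t := h1.prodMk h2
    have h4 : vf (x t) = (deriv q t, deriv V (q t)) := by
      simp only [hvdef, hxdef, hwdef]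
      exact Prod.ext (aux_div (deriv q t)) rfl
    rw [h4]; exact h3
  have hvC1 : ContDiffAt ℝ 1 vf (β, 0) := by
    apply ContDiffAt.prodMk
    · apply ContDiffAt.div contDiffAt_snd
        ((contDiffAt_const.sub (contDiffAt_snd.pow 2)).sqrt (by norm_num))
      norm_num
    · exact hV'C1.contDiffAt.comp _ contDiffAt_fst
  obtain ⟨K, s, hs, hlip⟩ := hvC1.exists_lipschitzOnWith
  have hvβ : vf (β, 0) = 0 := by
    simp [hvdef, hV'β]
  have hSopen : IsOpen {t | q t = β} := by
    rw [isOpen_iff_mem_nhds]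
    intro t₁ ht₁
    simp only [mem_setOf_eq] at ht₁
    have hp0 : deriv q t₁ = 0 := by
      apply deriv_zero_of_energy
      have := hen t₁
      rw [ht₁, hVβ, add_zero] at this; exact this
    have hw0 : w t₁ = 0 := by simp [hwdef, hp0]
    have hx1 : x t₁ = (β, 0) := by simp [hxdef, ht₁, hw0]
    have hmem : ∀ᶠ t in nhds t₁, x t ∈ s := by
      have := hxcont.continuousAt (x := t₁)
      exact this.eventually_mem (hx1 ▸ hs)
    obtain ⟨ε, hε, hball⟩ := Metric.eventually_nhds_iff_ball.mp hmem
    have ht₁mem : t₁ ∈ Ioo (t₁ - ε) (t₁ + ε) := by constructor <;> linarith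
    have heq : EqOn x (fun _ => (β, 0)) (Ioo (t₁ - ε) (t₁ + ε)) := by
      apply ODE_solution_unique_of_mem_Ioo (v := fun _ z => vf z) (s := fun _ => s)
        (fun _ _ => hlip) ht₁mem
      · intro t ht
        refine ⟨hxode t, hball t ?_⟩
        rw [Real.ball_eq_Ioo]; exact ht
      · intro t ht
        refine ⟨?_, mem_of_mem_nhds hs⟩
        simpa [hvβ] using (hasDerivAt_const t ((β : ℝ), (0:ℝ)))
      · exact hx1
    filter_upwards [Ioo_mem_nhds ht₁mem.1 ht₁mem.2] with t ht
    have := heq ht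
    simpa [hxdef, Prod.ext_iff] using congrArg Prod.fst this
  have hSclosed : IsClosed {t | q t = β} := isClosed_eq hqd.continuous continuous_const
  have := isClopen_iff.mp ⟨hSclosed, hSopen⟩
  rcases this with h | h
  · intro t ht
    exact absurd (h ▸ ht : t ∈ (∅ : Set ℝ)) (notMem_empty t)
  · exact absurd (show q 0 = β from by
      have : (0:ℝ) ∈ {t | q t = β} := h ▸ mem_univ 0; exact this) hq0

theorem statement10 (V : ℝ → ℝ) (α : ℝ) (hα : 0 < α)
    (hC2 : ContDiff ℝ 2 V) (hnn : ∀ t, 0 ≤ V t)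
    (hzero : V α = 0 ∧ V (-α) = 0 ∧ ∀ t, -α < t → t < α → 0 < V t)
    (hconv : 0 < deriv (deriv V) (-α) ∧ 0 < deriv (deriv V) α)
    (hV7 : ∃ d₁ d₂ d₃ d₄ : ℝ, 0 < d₁ ∧ 0 < d₂ ∧ 0 < d₃ ∧ 0 < d₄ ∧
      (∀ t, 0 ≤ t → t ≤ α →
        -(d₁ * t * |t - α|) ≤ deriv V t ∧ deriv V t ≤ -(d₂ * t * |t - α|)) ∧
      (∀ t, -α ≤ t → t ≤ 0 →
        -(d₃ * t * |t + α|) ≤ deriv V t ∧ deriv V t ≤ -(d₄ * t * |t + α|))) :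
    ∀ q₁ q₂ : ℝ → ℝ, IsMCHeteroclinic V α q₁ → IsMCHeteroclinic V α q₂ → q₁ = q₂ := by
  obtain ⟨hVα0, hVmα0, hVpos⟩ := hzero
  obtain ⟨d₁, d₂, d₃, d₄, hd₁, hd₂, hd₃, hd₄, hb₁, hb₂⟩ := hV7
  have hVdiff : Differentiable ℝ V := hC2.differentiable (by norm_num)
  have hVcont : Continuous V := hVdiff.continuous
  have hV'C1 : ContDiff ℝ 1 (deriv V) := by
    have h2 : ContDiff ℝ ((1:WithTop ℕ∞)+1) V := hC2.of_le (by norm_num)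
    exact (contDiff_succ_iff_deriv.mp h2).2.2
  have hV'α : deriv V α = 0 := by
    have h := hb₁ α hα.le le_rfl
    simp only [sub_self, abs_zero, mul_zero, neg_zero] at h
    linarith [h.1, h.2]
  have hV'mα : deriv V (-α) = 0 := by
    have h := hb₂ (-α) le_rfl (by linarith)
    simp only [neg_add_cancel, abs_zero, mul_zero, neg_zero] at h
    linarith [h.1, h.2]
  have key : ∀ q : ℝ → ℝ, IsMCHeteroclinic V α q →
      (∀ t, q t ∈ Ioo (-α) α) ∧ (∀ t, 0 < deriv q t) ∧
      (∀ t, (Real.sqrt (1 + (deriv q t)^2))⁻¹ + V (q t) = 1) := by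
    intro q hq
    obtain ⟨hqd, hode, hq'd, hq'c, hq0, htop, hbot⟩ := hq
    have hconst := energy_const V q hVdiff hqd hode
    have hen := energy_one V q α hVcont hVα0 hqd htop hconst
    have hnα : ∀ t, q t ≠ α :=
      no_touch V q α hV'C1 hVα0 hV'α hqd hq'c hode hen (by rw [hq0]; exact hα.ne)
    have hnmα : ∀ t, q t ≠ -α :=
      no_touch V q (-α) hV'C1 hVmα0 hV'mα hqd hq'c hode hen
        (by rw [hq0]; exact (neg_lt_zero.mpr hα).ne')
    have hrange : ∀ t, q t ∈ Ioo (-α) α := by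
      intro t
      constructor
      · by_contra hle; push_neg at hle
        have hlt : q t < -α := lt_of_le_of_ne hle (hnmα t)
        have hmem : -α ∈ uIcc (q t) (q 0) :=
          mem_uIcc.mpr (Or.inl ⟨hlt.le, by rw [hq0]; linarith⟩)
        obtain ⟨s', _, hs'⟩ := intermediate_value_uIcc (hqd.continuous.continuousOn) hmem
        exact hnmα s' hs'
      · by_contra hle; push_neg at hle
        have hlt : α < q t := lt_of_le_of_ne hle (Ne.symm (hnα t))
        have hmem : α ∈ uIcc (q 0) (q t) :=
          mem_uIcc.mpr (Or.inl ⟨by rw [hq0]; linarith, hlt.le⟩)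
        obtain ⟨s', _, hs'⟩ := intermediate_value_uIcc (hqd.continuous.continuousOn) hmem
        exact hnα s' hs'
    have hpne : ∀ t, deriv q t ≠ 0 := by
      intro t h0
      have h := hen t
      rw [h0] at h
      norm_num at h
      exact (hVpos (q t) (hrange t).1 (hrange t).2).ne' h
    have hsome : ∃ c, 0 < deriv q c := by
      have h1 : ∀ᶠ t in atTop, 0 < q t := htop.eventually (eventually_gt_nhds hα)
      obtain ⟨T, hTq, hT0⟩ := (h1.and (eventually_gt_atTop 0)).exists
      obtain ⟨c, _, hc'⟩ := exists_deriv_eq_slope q hT0 (hqd.continuous.continuousOn)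
        (hqd.differentiableOn)
      refine ⟨c, ?_⟩
      rw [hc', hq0, sub_zero, sub_zero]
      exact div_pos hTq hT0
    obtain ⟨c, hcpos⟩ := hsome
    have hppos : ∀ t, 0 < deriv q t := by
      intro t
      by_contra hle; push_neg at hle
      have hlt : deriv q t < 0 := lt_of_le_of_ne hle (hpne t)
      have hmem : (0:ℝ) ∈ uIcc (deriv q t) (deriv q c) :=
        mem_uIcc.mpr (Or.inl ⟨hlt.le, hcpos.le⟩)
      obtain ⟨s', _, hs'⟩ := intermediate_value_uIcc (hq'c.continuousOn) hmem
      exact hpne s' hs'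
    exact ⟨hrange, hppos, hen⟩
  intro q₁ q₂ hq₁ hq₂
  obtain ⟨hr₁, hp₁, he₁⟩ := key q₁ hq₁
  obtain ⟨hr₂, hp₂, he₂⟩ := key q₂ hq₂
  obtain ⟨hqd₁, hode₁, hq'd₁, hq'c₁, hq0₁, htop₁, hbot₁⟩ := hq₁
  obtain ⟨hqd₂, hode₂, hq'd₂, hq'c₂, hq0₂, htop₂, hbot₂⟩ := hq₂
  have hVlt : ∀ u ∈ Ioo (-α) α, V u < 1 := by
    intro u hu
    obtain ⟨tp, hp'⟩ := (htop₁.eventually (eventually_gt_nhds hu.2)).exists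
    obtain ⟨tm, hm'⟩ := (hbot₁.eventually (eventually_lt_nhds hu.1)).exists
    have hmem : u ∈ uIcc (q₁ tm) (q₁ tp) := mem_uIcc.mpr (Or.inl ⟨hm'.le, hp'.le⟩)
    obtain ⟨s', _, hs'⟩ := intermediate_value_uIcc (hqd₁.continuous.continuousOn) hmem
    have h := he₁ s'
    rw [hs'] at h
    have hpos : 0 < (Real.sqrt (1 + (deriv q₁ s')^2))⁻¹ := by positivity
    linarith
  set F : ℝ → ℝ := fun u => Real.sqrt ((1 - V u)⁻¹^2 - 1) with hFdef
  have hpF : ∀ (q : ℝ → ℝ), (∀ t, 0 < deriv q t) →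
      (∀ t, (Real.sqrt (1 + (deriv q t)^2))⁻¹ + V (q t) = 1) →
      ∀ t, deriv q t = F (q t) := by
    intro q hpos hen t
    have h := hen t
    have hsp : (0:ℝ) < Real.sqrt (1 + (deriv q t)^2) := by positivity
    have hc : 1 - V (q t) = (Real.sqrt (1 + (deriv q t)^2))⁻¹ := by linarith
    have harg : (1 - V (q t))⁻¹^2 - 1 = (deriv q t)^2 := by
      rw [hc, inv_inv, Real.sq_sqrt (by positivity : (0:ℝ) ≤ 1 + (deriv q t)^2)]
      ring
    rw [hFdef]
    simp only [harg]
    rw [Real.sqrt_sq (hpos t).le]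
  have hFC1 : ∀ u ∈ Ioo (-α) α, ContDiffAt ℝ 1 F u := by
    intro u hu
    have h0 : 0 < V u := hVpos u hu.1 hu.2
    have h1 : V u < 1 := hVlt u hu
    have hne : (1:ℝ) - V u ≠ 0 := by linarith
    have hVC1 : ContDiffAt ℝ 1 V u := (hC2.of_le one_le_two).contDiffAt
    have hg : ContDiffAt ℝ 1 (fun u => (1 - V u)⁻¹^2 - 1) u :=
      (((contDiffAt_const.sub hVC1).inv hne).pow 2).sub contDiffAt_const
    apply hg.sqrt
    have h2 : 1 < (1 - V u)⁻¹ := (one_lt_inv_iff₀).mpr ⟨by linarith, by linarith⟩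
    nlinarith
  have hT : IsClopen {t | q₁ t = q₂ t} := by
    constructor
    · exact isClosed_eq hqd₁.continuous hqd₂.continuous
    · rw [isOpen_iff_mem_nhds]
      intro t₁ ht₁
      simp only [mem_setOf_eq] at ht₁
      obtain ⟨K, s, hs, hlip⟩ := (hFC1 (q₁ t₁) (hr₁ t₁)).exists_lipschitzOnWith
      have hm₁ : ∀ᶠ t in nhds t₁, q₁ t ∈ s := (hqd₁.continuous.continuousAt).eventually_mem hs
      have hm₂ : ∀ᶠ t in nhds t₁, q₂ t ∈ s :=
        (hqd₂.continuous.continuousAt).eventually_mem (ht₁ ▸ hs)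
      obtain ⟨ε, hε, hball⟩ := Metric.eventually_nhds_iff_ball.mp (hm₁.and hm₂)
      have ht₁mem : t₁ ∈ Ioo (t₁ - ε) (t₁ + ε) := ⟨by linarith, by linarith⟩
      have heq : EqOn q₁ q₂ (Ioo (t₁ - ε) (t₁ + ε)) := by
        apply ODE_solution_unique_of_mem_Ioo (v := fun _ z => F z) (s := fun _ => s)
          (fun _ _ => hlip) ht₁mem
        · intro t ht
          refine ⟨?_, (hball t (by rwa [Real.ball_eq_Ioo])).1⟩
          have h := (hqd₁ t).hasDerivAt
          rwa [hpF q₁ hp₁ he₁ t] at h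
        · intro t ht
          refine ⟨?_, (hball t (by rwa [Real.ball_eq_Ioo])).2⟩
          have h := (hqd₂ t).hasDerivAt
          rwa [hpF q₂ hp₂ he₂ t] at h
        · exact ht₁
      filter_upwards [Ioo_mem_nhds ht₁mem.1 ht₁mem.2] with t ht using heq ht
  rcases isClopen_iff.mp hT with h | h
  · exfalso
    have h0 : (0:ℝ) ∈ {t | q₁ t = q₂ t} := by
      simp only [mem_setOf_eq, hq0₁, hq0₂]
    rw [h] at h0
    exact notMem_empty _ h0
  · funext t
    have : t ∈ {t | q₁ t = q₂ t} := h ▸ mem_univ t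
    exact this
end

section
/- Assume (φ1), V ∈ C¹(ℝ,ℝ), V ≥ 0, V(α) = V(−α) = 0 for some α > 0, and let q be a twice differentiable classical solution with continuous derivative of −(φ(|u'|)u')' + V'(u) = 0 on ℝ with q(t) → α as t → +∞ and q(t) → −α as t → −∞. Then q'(t) → 0 as t → +∞ and q'(t) → 0 as t → −∞. -/
open Real Filter Set MeasureTheory

/-- the momentum map -/
noncomputable def wfun (φ q : ℝ → ℝ) (s : ℝ) : ℝ :=
  if deriv q s = 0 then 0 else φ |deriv q s| * deriv q s

/-- the "kinetic energy" function `s ↦ s * φ(|s|) * s - Φ(s)` -/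
noncomputable def Fen (φ : ℝ → ℝ) (s : ℝ) : ℝ :=
  s * (if s = 0 then 0 else φ |s| * s) - Phi φ s

section helpers

variable {φ : ℝ → ℝ} (hφc : ContinuousOn φ (Set.Ioi 0))
  (hm : StrictMonoOn (fun s => φ s * s) (Set.Ioi 0))
  (hφpos : ∀ t > (0:ℝ), 0 < φ t)

lemma mle (hm : StrictMonoOn (fun s => φ s * s) (Set.Ioi 0)) {a b : ℝ}
    (ha : 0 < a) (hab : a ≤ b) : φ a * a ≤ φ b * b := by
  rcases eq_or_lt_of_le hab with h | h
  · rw [h]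
  · simpa using (hm ha (ha.trans h) h).le

include hφc hm hφpos in
lemma integOn {b : ℝ} (hb : 0 < b) :
    IntegrableOn (fun s => s * φ s) (Set.Ioc 0 b) := by
  have hcont : ContinuousOn (fun s => s * φ s) (Set.Ioc 0 b) :=
    continuousOn_id.mul (hφc.mono Set.Ioc_subset_Ioi_self)
  refine ⟨hcont.aestronglyMeasurable measurableSet_Ioc, ?_⟩
  apply HasFiniteIntegral.restrict_of_bounded (C := φ b * b) measure_Ioc_lt_top
  rw [ae_restrict_iff' measurableSet_Ioc]
  refine ae_of_all _ fun x hx => ?_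
  rw [Real.norm_eq_abs, abs_of_nonneg (mul_nonneg hx.1.le (hφpos x hx.1).le)]
  calc x * φ x = φ x * x := mul_comm _ _
    _ ≤ φ b * b := mle hm hx.1 hx.2

include hφc hm hφpos in
lemma intInteg {a b : ℝ} (ha : 0 ≤ a) (hab : a ≤ b) :
    IntervalIntegrable (fun s => s * φ s) volume a b := by
  rw [intervalIntegrable_iff, uIoc_of_le hab]
  rcases le_or_gt b 0 with hb | hb
  · rw [Set.Ioc_eq_empty (not_lt.mpr (hb.trans ha))]
    exact integrableOn_empty
  · exact (integOn hφc hm hφpos hb).mono_set (Set.Ioc_subset_Ioc_left ha)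

include hφc hm hφpos in
lemma integral_le {a b : ℝ} (ha : 0 ≤ a) (hab : a ≤ b) (hb : 0 < b) :
    ∫ s in a..b, s * φ s ≤ (b - a) * (φ b * b) := by
  have hpt : ∀ x ∈ Set.Icc a b, x * φ x ≤ φ b * b := by
    intro x hx
    rcases eq_or_lt_of_le (ha.trans hx.1) with h0 | h0
    · rw [← h0, zero_mul]
      exact mul_nonneg (hφpos b hb).le hb.le
    · calc x * φ x = φ x * x := mul_comm _ _
        _ ≤ φ b * b := mle hm h0 hx.2
  have h1 := intervalIntegral.integral_mono_on (μ := volume) hab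
    (intInteg hφc hm hφpos ha hab) (intervalIntegrable_const (c := φ b * b)) hpt
  rw [intervalIntegral.integral_const] at h1
  simpa [smul_eq_mul] using h1

lemma Phi_nonneg (hφpos : ∀ t > (0:ℝ), 0 < φ t) (t : ℝ) : 0 ≤ Phi φ t := by
  apply intervalIntegral.integral_nonneg (abs_nonneg t)
  intro u hu
  rcases eq_or_lt_of_le hu.1 with h | h
  · rw [← h, zero_mul]
  · exact mul_nonneg h.le (hφpos u h).le

include hφc hm hφpos in
lemma Phi_le {t : ℝ} (ht : t ≠ 0) : Phi φ t ≤ |t| * (φ |t| * |t|) := by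
  have hb : 0 < |t| := abs_pos.mpr ht
  have := integral_le hφc hm hφpos le_rfl hb.le hb
  simpa [Phi] using this

include hφc hm hφpos in
lemma Phi_split {a b : ℝ} (ha : 0 < a) (hab : a ≤ b) :
    Phi φ b = Phi φ a + ∫ s in a..b, s * φ s := by
  have hb : 0 < b := ha.trans_le hab
  rw [Phi, Phi, abs_of_pos ha, abs_of_pos hb]
  exact (intervalIntegral.integral_add_adjacent_intervals
    (intInteg hφc hm hφpos le_rfl ha.le) (intInteg hφc hm hφpos ha.le hab)).symm

lemma Fen_abs (φ : ℝ → ℝ) (s : ℝ) : Fen φ |s| = Fen φ s := by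
  rcases eq_or_ne s 0 with h | h
  · simp [h]
  · unfold Fen Phi
    rw [abs_abs, if_neg (abs_ne_zero.mpr h), if_neg h]
    rw [show |s| * (φ |s| * |s|) = φ |s| * (|s| * |s|) by ring,
      show s * (φ |s| * s) = φ |s| * (s * s) by ring, abs_mul_abs_self]

include hφc hm hφpos in
lemma Fen_pos {a : ℝ} (ha : 0 < a) : 0 < Fen φ a := by
  have h2 : (0:ℝ) < a / 2 := by linarith
  have hsplit := Phi_split hφc hm hφpos h2 (by linarith : a / 2 ≤ a)
  have h3 := Phi_le hφc hm hφpos (ne_of_gt h2)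
  rw [abs_of_pos h2] at h3
  have h4 := integral_le hφc hm hφpos h2.le (by linarith : a / 2 ≤ a) ha
  have h5 : φ (a / 2) * (a / 2) < φ a * a := by
    simpa using hm (Set.mem_Ioi.mpr h2) (Set.mem_Ioi.mpr ha) (by linarith)
  have h6 : (a / 2) * (φ (a / 2) * (a / 2)) < (a / 2) * (φ a * a) :=
    mul_lt_mul_of_pos_left h5 h2
  unfold Fen
  rw [if_neg (ne_of_gt ha), abs_of_pos ha]
  nlinarith [hsplit, h3, h4, h6]

include hφc hm hφpos in
lemma Fen_mono {a b : ℝ} (ha : 0 < a) (hab : a ≤ b) : Fen φ a ≤ Fen φ b := by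
  rcases eq_or_lt_of_le hab with h | h
  · rw [h]
  · have hb : 0 < b := ha.trans h
    have hsplit := Phi_split hφc hm hφpos ha h.le
    have h4 := integral_le hφc hm hφpos ha.le h.le hb
    have h5 : φ a * a < φ b * b := by
      simpa using hm (Set.mem_Ioi.mpr ha) (Set.mem_Ioi.mpr hb) h
    unfold Fen
    rw [if_neg (ne_of_gt ha), if_neg (ne_of_gt hb), abs_of_pos ha, abs_of_pos hb]
    nlinarith [h5, mul_le_mul_of_nonneg_left h5.le ha.le]

include hφc hm hφpos in
lemma Fen_nonneg (s : ℝ) : 0 ≤ Fen φ s := by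
  rcases eq_or_ne s 0 with h | h
  · simp [h, Fen, Phi]
  · rw [← Fen_abs]
    exact (Fen_pos hφc hm hφpos (abs_pos.mpr h)).le

include hφc hm hφpos in
lemma Fen_le {s : ℝ} (hs : |s| ≤ 1) : Fen φ s ≤ |s| * (φ 1 * 1) := by
  rcases eq_or_ne s 0 with h | h
  · simp [h, Fen, Phi]
  · have h0 : 0 < |s| := abs_pos.mpr h
    have h1 : Fen φ s ≤ s * (φ |s| * s) := by
      unfold Fen
      rw [if_neg h]
      linarith [Phi_nonneg hφpos s]
    have h2 : s * (φ |s| * s) = |s| * (φ |s| * |s|) := by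
      rw [show |s| * (φ |s| * |s|) = φ |s| * (|s| * |s|) by ring,
        show s * (φ |s| * s) = φ |s| * (s * s) by ring, abs_mul_abs_self]
    have h3 : φ |s| * |s| ≤ φ 1 * 1 := mle hm h0 hs
    calc Fen φ s ≤ |s| * (φ |s| * |s|) := by rw [← h2]; exact h1
      _ ≤ |s| * (φ 1 * 1) := mul_le_mul_of_nonneg_left h3 (abs_nonneg s)

include hφc hm hφpos in
lemma Phi_hasDerivAt {s : ℝ} (hs : s ≠ 0) : HasDerivAt (Phi φ) (s * φ |s|) s := by
  have hcont : ContinuousOn (fun u => u * φ u) (Set.Ioi 0) := continuousOn_id.mul hφc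
  rcases hs.lt_or_gt with hneg | hpos
  · have hps : 0 < -s := by linarith
    have hG : HasDerivAt (fun u => ∫ x in (0:ℝ)..u, x * φ x) ((-s) * φ (-s)) (-s) :=
      intervalIntegral.integral_hasDerivAt_right (intInteg hφc hm hφpos le_rfl hps.le)
        (hcont.stronglyMeasurableAtFilter isOpen_Ioi (-s) hps)
        (hcont.continuousAt (isOpen_Ioi.mem_nhds hps))
    have hcomp := hG.comp s (hasDerivAt_neg s)
    have heq : Phi φ =ᶠ[nhds s] ((fun u => ∫ x in (0:ℝ)..u, x * φ x) ∘ fun u => -u) := by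
      filter_upwards [eventually_lt_nhds hneg] with u hu
      simp [Phi, Function.comp, abs_of_neg hu]
    have hfin : HasDerivAt (Phi φ) ((-s) * φ (-s) * (-1)) s :=
      hcomp.congr_of_eventuallyEq heq
    convert hfin using 1
    rw [abs_of_neg hneg]; ring
  · have hG : HasDerivAt (fun u => ∫ x in (0:ℝ)..u, x * φ x) (s * φ s) s :=
      intervalIntegral.integral_hasDerivAt_right (intInteg hφc hm hφpos le_rfl hpos.le)
        (hcont.stronglyMeasurableAtFilter isOpen_Ioi s hpos)
        (hcont.continuousAt (isOpen_Ioi.mem_nhds hpos))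
    have heq : Phi φ =ᶠ[nhds s] (fun u => ∫ x in (0:ℝ)..u, x * φ x) := by
      filter_upwards [eventually_gt_nhds hpos] with u hu
      simp [Phi, abs_of_pos hu]
    have := hG.congr_of_eventuallyEq heq
    rwa [abs_of_pos hpos]

end helpers

theorem statement12 (φ V : ℝ → ℝ) (α : ℝ)
    (hφC1 : ContDiffOn ℝ 1 φ (Set.Ioi 0))
    (hφpos : ∀ t > (0:ℝ), 0 < φ t)
    (hφ1 : ∀ t > (0:ℝ), 0 < deriv (fun s => φ s * s) t)
    (hV1 : ContDiff ℝ 1 V) (hVnn : ∀ t, 0 ≤ V t)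
    (hα : 0 < α) (hVα : V α = 0) (hVα' : V (-α) = 0)
    (q : ℝ → ℝ) (hq : IsClassicalSolution φ V q)
    (hq' : Differentiable ℝ (deriv q)) (hqc : Continuous (deriv q))
    (hqtop : Tendsto q atTop (nhds α)) (hqbot : Tendsto q atBot (nhds (-α))) :
    Tendsto (deriv q) atTop (nhds 0) ∧ Tendsto (deriv q) atBot (nhds 0) := by
  have hφc : ContinuousOn φ (Set.Ioi 0) := hφC1.continuousOn
  have hm : StrictMonoOn (fun s => φ s * s) (Set.Ioi 0) := by
    apply strictMonoOn_of_deriv_pos (convex_Ioi 0) (hφc.mul continuousOn_id)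
    intro x hx
    rw [interior_Ioi] at hx
    exact hφ1 x hx
  have hqd : Differentiable ℝ q := hq.1
  have hqw : ∀ t : ℝ, HasDerivAt (wfun φ q) (deriv V (q t)) t := hq.2
  have hVd : Differentiable ℝ V := hV1.differentiable one_ne_zero
  -- derivative of Φ(q'(t))
  have hPhiDeriv : ∀ t : ℝ, HasDerivAt (fun u => Phi φ (deriv q u))
      (wfun φ q t * deriv (deriv q) t) t := by
    intro t
    by_cases h : deriv q t = 0
    · have hwt0 : wfun φ q t = 0 := if_pos h
      rw [hwt0, zero_mul, hasDerivAt_iff_tendsto_slope]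
      have hslope : Tendsto (slope (deriv q) t) (nhdsWithin t {t}ᶜ)
          (nhds (deriv (deriv q) t)) :=
        hasDerivAt_iff_tendsto_slope.mp (hq' t).hasDerivAt
      have hwt : Tendsto (fun s => |wfun φ q s|) (nhdsWithin t {t}ᶜ) (nhds 0) := by
        have h1 : Tendsto (wfun φ q) (nhdsWithin t {t}ᶜ) (nhds (wfun φ q t)) :=
          ((hqw t).continuousAt.tendsto).mono_left nhdsWithin_le_nhds
        rw [hwt0] at h1
        simpa using h1.abs
      refine squeeze_zero_norm' (a := fun s => |slope (deriv q) t s| * |wfun φ q s|) ?_ ?_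
      · filter_upwards [self_mem_nhdsWithin] with s hs
        have hst : s ≠ t := hs
        have hstpos : 0 < |s - t| := abs_pos.mpr (sub_ne_zero.mpr hst)
        have hPt : Phi φ (deriv q t) = 0 := by simp [Phi, h]
        have hkey : Phi φ (deriv q s) ≤ |deriv q s| * |wfun φ q s| := by
          rcases eq_or_ne (deriv q s) 0 with h0 | h0
          · simp [h0, Phi, wfun]
          · have hP := Phi_le hφc hm hφpos h0
            have habs : |wfun φ q s| = φ |deriv q s| * |deriv q s| := by
              rw [wfun, if_neg h0, abs_mul,
                abs_of_pos (hφpos _ (abs_pos.mpr h0))]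
            rw [habs]
            exact hP
        rw [Real.norm_eq_abs, slope_def_field, slope_def_field, hPt, sub_zero, h, sub_zero,
          abs_div, abs_div]
        calc |Phi φ (deriv q s)| / |s - t| = Phi φ (deriv q s) / |s - t| := by
              rw [abs_of_nonneg (Phi_nonneg hφpos _)]
          _ ≤ (|deriv q s| * |wfun φ q s|) / |s - t| := by gcongr
          _ = |deriv q s| / |s - t| * |wfun φ q s| := by ring
      · have := hslope.abs.mul hwt
        simpa using this
    · have hP := Phi_hasDerivAt hφc hm hφpos h
      have hcomp := hP.comp t (hq' t).hasDerivAt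
      have : wfun φ q t = φ |deriv q t| * deriv q t := if_neg h
      rw [this]
      simpa [Function.comp_def, mul_comm, mul_assoc, mul_left_comm] using hcomp
  -- energy is constant
  have hE : ∀ s t : ℝ, Fen φ (deriv q s) - V (q s) = Fen φ (deriv q t) - V (q t) := by
    have hEd : ∀ t : ℝ, HasDerivAt (fun u => Fen φ (deriv q u) - V (q u)) 0 t := by
      intro t
      have h1 : HasDerivAt (fun u => deriv q u * wfun φ q u)
          (deriv (deriv q) t * wfun φ q t + deriv q t * deriv V (q t)) t :=
        (hq' t).hasDerivAt.mul (hqw t)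
      have h2 := hPhiDeriv t
      have h3 : HasDerivAt (fun u => V (q u)) (deriv V (q t) * deriv q t) t :=
        (hVd (q t)).hasDerivAt.comp t (hqd t).hasDerivAt
      have h4 := (h1.sub h2).sub h3
      have hval : deriv (deriv q) t * wfun φ q t + deriv q t * deriv V (q t) -
          wfun φ q t * deriv (deriv q) t - deriv V (q t) * deriv q t = 0 := by ring
      have hfun : (fun u => Fen φ (deriv q u) - V (q u)) =
          (fun u => deriv q u * wfun φ q u - Phi φ (deriv q u) - V (q u)) := by
        funext u
        simp only [Fen, wfun]
      rw [hfun]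
      exact hval ▸ h4
    intro s t
    exact is_const_of_deriv_eq_zero (fun x => (hEd x).differentiableAt)
      (fun x => (hEd x).deriv) s t
  -- a sequence along which q' tends to 0
  have hmvt : ∀ n : ℕ, ∃ c ∈ Set.Ioo (n : ℝ) ((n : ℝ) + 1),
      deriv q c = (q ((n : ℝ) + 1) - q (n : ℝ)) / (((n : ℝ) + 1) - (n : ℝ)) := by
    intro n
    exact exists_deriv_eq_slope q (by linarith) hqd.continuous.continuousOn
      hqd.differentiableOn
  choose c hc hc' using hmvt
  have hctop : Tendsto c atTop atTop :=
    tendsto_atTop_mono (fun n => (hc n).1.le) tendsto_natCast_atTop_atTop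
  have hq'c : Tendsto (fun n => deriv q (c n)) atTop (nhds 0) := by
    have h1 : Tendsto (fun n : ℕ => q ((n : ℝ) + 1)) atTop (nhds α) :=
      hqtop.comp (tendsto_atTop_add_const_right _ 1 tendsto_natCast_atTop_atTop)
    have h2 : Tendsto (fun n : ℕ => q (n : ℝ)) atTop (nhds α) :=
      hqtop.comp tendsto_natCast_atTop_atTop
    have h3 : (fun n => deriv q (c n)) = fun n : ℕ => q ((n : ℝ) + 1) - q (n : ℝ) := by
      funext n
      rw [hc' n]
      simp
    rw [h3]
    simpa using h1.sub h2
  have hqcq : Tendsto (fun n => q (c n)) atTop (nhds α) := hqtop.comp hctop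
  have hFen0 : Tendsto (fun n => Fen φ (deriv q (c n))) atTop (nhds 0) := by
    have hev : ∀ᶠ n : ℕ in atTop, |deriv q (c n)| < 1 := by
      have := hq'c.abs
      simp only [abs_zero] at this
      exact this.eventually (eventually_lt_nhds one_pos)
    apply squeeze_zero' (Eventually.of_forall fun n => Fen_nonneg hφc hm hφpos _)
      (hev.mono fun n hn => Fen_le hφc hm hφpos hn.le)
    have := hq'c.abs.mul_const (φ 1 * 1)
    simpa using this
  have hVcq : Tendsto (fun n => V (q (c n))) atTop (nhds 0) := by
    have := (hV1.continuous.tendsto α).comp hqcq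
    rwa [hVα] at this
  -- energy equals zero
  have hE0 : ∀ t : ℝ, Fen φ (deriv q t) = V (q t) := by
    have h5 : Tendsto (fun n => Fen φ (deriv q (c n)) - V (q (c n))) atTop (nhds 0) := by
      simpa using hFen0.sub hVcq
    have h6 : (fun n => Fen φ (deriv q (c n)) - V (q (c n))) =
        fun _ => Fen φ (deriv q 0) - V (q 0) := funext fun n => hE (c n) 0
    rw [h6] at h5
    have hC0 : Fen φ (deriv q 0) - V (q 0) = 0 := tendsto_nhds_unique tendsto_const_nhds h5
    intro t
    have := hE t 0
    linarith
  -- conclusion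
  have key : ∀ l : Filter ℝ, Tendsto (fun t => V (q t)) l (nhds 0) →
      Tendsto (deriv q) l (nhds 0) := by
    intro l hl
    rw [Metric.tendsto_nhds]
    intro ε hε
    have hFε : 0 < Fen φ ε := Fen_pos hφc hm hφpos hε
    filter_upwards [hl (Iio_mem_nhds hFε)] with t ht
    rw [Real.dist_eq, sub_zero]
    by_contra hge
    push_neg at hge
    have hmono : Fen φ ε ≤ Fen φ |deriv q t| := Fen_mono hφc hm hφpos hε hge
    rw [Fen_abs, hE0 t] at hmono
    exact absurd ht (not_lt.mpr hmono)
  refine ⟨key atTop ?_, key atBot ?_⟩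
  · have := (hV1.continuous.tendsto α).comp hqtop
    rwa [hVα] at this
  · have := (hV1.continuous.tendsto (-α)).comp hqbot
    rwa [hVα'] at this
end

section
/- Assume (φ1)–(φ2), let V ∈ C¹(ℝ,ℝ) with V ≥ 0, and let q be a twice differentiable classical solution of −(φ(|u'|)u')' + V'(u) = 0 on ℝ with q'(t) > 0 for all t ∈ ℝ and finite energy ∫_ℝ (Φ(q'(t)) + V(q(t))) dt < ∞. Then G(q'(t)) = V(q(t)) for every t ∈ ℝ, where G(t) = ∫₀^t s(φ'(s)s + φ(s)) ds. -/
open Real Filter Set MeasureTheory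

noncomputable def Gfun (φ : ℝ → ℝ) (t : ℝ) : ℝ :=
  ∫ s in (0:ℝ)..t, s * (deriv φ s * s + φ s)

/-- Helper: a function continuous on `(0,∞)` and bounded on `(0,x]` is interval
integrable on `[0,x]`. -/
lemma aux_intervalIntegrable (f : ℝ → ℝ) (x : ℝ) (hx : 0 < x)
    (hcont : ContinuousOn f (Ioi 0)) (C : ℝ)
    (hC : ∀ s ∈ Ioc (0:ℝ) x, |f s| ≤ C) :
    IntervalIntegrable f volume 0 x := by
  rw [intervalIntegrable_iff_integrableOn_Ioc_of_le hx.le]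
  refine ⟨(hcont.mono (fun s hs => hs.1)).aestronglyMeasurable measurableSet_Ioc, ?_⟩
  refine HasFiniteIntegral.restrict_of_bounded (C := C) ?_ ?_
  · simp [Real.volume_Ioc]
  · filter_upwards [ae_restrict_mem measurableSet_Ioc] with s hs
    simpa [Real.norm_eq_abs] using hC s hs

theorem statement13 (φ V : ℝ → ℝ) (l m : ℝ)
    (hφC1 : ContDiffOn ℝ 1 φ (Set.Ioi 0))
    (hφpos : ∀ t > (0:ℝ), 0 < φ t)
    (hφ1 : ∀ t > (0:ℝ), 0 < deriv (fun s => φ s * s) t)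
    (hl : 1 < l) (hlm : l ≤ m)
    (hφ2 : ∀ t > (0:ℝ), l - 1 ≤ deriv (fun s => φ s * s) t / φ t ∧
      deriv (fun s => φ s * s) t / φ t ≤ m - 1)
    (hV1 : ContDiff ℝ 1 V) (hVnn : ∀ t, 0 ≤ V t)
    (q : ℝ → ℝ) (hq : IsClassicalSolution φ V q)
    (hq'' : Differentiable ℝ (deriv q))
    (hqpos : ∀ t : ℝ, 0 < deriv q t)
    (hfin : (∫⁻ t : ℝ, ENNReal.ofReal (Phi φ (deriv q t) + V (q t))) < ⊤) :
    ∀ t : ℝ, Gfun φ (deriv q t) = V (q t) := by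
  have hm1 : (0:ℝ) < m - 1 := by linarith
  -- basic facts about φ
  have hφdiff : ∀ y : ℝ, 0 < y → DifferentiableAt ℝ φ y := fun y hy =>
    ((hφC1.contDiffAt (Ioi_mem_nhds hy)).differentiableAt one_ne_zero)
  have hD : ∀ y : ℝ, 0 < y →
      HasDerivAt (fun u => φ u * u) (deriv φ y * y + φ y) y := by
    intro y hy
    simpa using (hφdiff y hy).hasDerivAt.fun_mul (hasDerivAt_id y)
  have hDval : ∀ y : ℝ, 0 < y →
      deriv (fun u => φ u * u) y = deriv φ y * y + φ y := fun y hy => (hD y hy).deriv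
  have hderivφcont : ContinuousOn (deriv φ) (Ioi 0) :=
    hφC1.continuousOn_deriv_of_isOpen isOpen_Ioi le_rfl
  set g : ℝ → ℝ := fun s => s * (deriv φ s * s + φ s) with hg_def
  have hgcont : ContinuousOn g (Ioi 0) :=
    continuousOn_id.mul ((hderivφcont.mul continuousOn_id).add hφC1.continuousOn)
  have hsum_pos : ∀ s : ℝ, 0 < s → 0 < deriv φ s * s + φ s := by
    intro s hs
    have := hφ1 s hs
    rwa [hDval s hs] at this
  have hgnn : ∀ s : ℝ, 0 ≤ s → 0 ≤ g s := by
    intro s hs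
    rcases eq_or_lt_of_le hs with h | h
    · simp [hg_def, ← h]
    · exact le_of_lt (mul_pos h (hsum_pos s h))
  have hsum_le : ∀ s : ℝ, 0 < s → deriv φ s * s + φ s ≤ (m - 1) * φ s := by
    intro s hs
    have h2 := (hφ2 s hs).2
    rw [hDval s hs] at h2
    have hφs := hφpos s hs
    rw [div_le_iff₀ hφs] at h2
    linarith
  -- monotonicity of φ(s)*s
  have hFmono : StrictMonoOn (fun u => φ u * u) (Ioi 0) := by
    refine strictMonoOn_of_deriv_pos (convex_Ioi 0)
      (hφC1.continuousOn.mul continuousOn_id) ?_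
    rw [interior_Ioi]; exact fun x hx => hφ1 x hx
  -- integrability
  have hint_sφ : ∀ x : ℝ, 0 < x → IntervalIntegrable (fun s => s * φ s) volume 0 x := by
    intro x hx
    refine aux_intervalIntegrable _ x hx
      (continuousOn_id.mul hφC1.continuousOn) (φ x * x) ?_
    intro s hs
    have h1 : (0:ℝ) < s := hs.1
    have h2 : φ s * s ≤ φ x * x := by
      rcases eq_or_lt_of_le hs.2 with h | h
      · rw [h]
      · exact le_of_lt (hFmono h1 (lt_trans h1 h) h)
    have : 0 ≤ s * φ s := le_of_lt (mul_pos h1 (hφpos s h1))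
    rw [abs_of_nonneg this]; linarith [h2]
  have hint_g : ∀ x : ℝ, 0 < x → IntervalIntegrable g volume 0 x := by
    intro x hx
    refine aux_intervalIntegrable g x hx hgcont ((m - 1) * (φ x * x)) ?_
    intro s hs
    have h1 : (0:ℝ) < s := hs.1
    have h2 : φ s * s ≤ φ x * x := by
      rcases eq_or_lt_of_le hs.2 with h | h
      · rw [h]
      · exact le_of_lt (hFmono h1 (lt_trans h1 h) h)
    have h3 : g s ≤ (m - 1) * (φ s * s) := by
      have := hsum_le s h1
      have : s * (deriv φ s * s + φ s) ≤ s * ((m - 1) * φ s) :=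
        mul_le_mul_of_nonneg_left this h1.le
      calc g s ≤ s * ((m - 1) * φ s) := this
        _ = (m - 1) * (φ s * s) := by ring
    rw [abs_of_nonneg (hgnn s h1.le)]
    calc g s ≤ (m - 1) * (φ s * s) := h3
      _ ≤ (m - 1) * (φ x * x) := by nlinarith
  -- FTC for Gfun
  have hGderiv : ∀ y : ℝ, 0 < y → HasDerivAt (Gfun φ) (g y) y := by
    intro y hy
    exact intervalIntegral.integral_hasDerivAt_right (hint_g y hy)
      ⟨Ioi 0, Ioi_mem_nhds hy, hgcont.aestronglyMeasurable measurableSet_Ioi⟩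
      (hgcont.continuousAt (Ioi_mem_nhds hy))
  -- the conserved quantity
  set E : ℝ → ℝ := fun t => Gfun φ (deriv q t) - V (q t) with hE_def
  have hEderiv : ∀ t : ℝ, HasDerivAt E 0 t := by
    intro t
    set y := deriv q t with hy_def
    have hy : 0 < y := hqpos t
    have hq't : HasDerivAt (deriv q) (deriv (deriv q) t) t := (hq'' t).hasDerivAt
    -- the equation: (φ(q')q')' = V'(q)
    have hf_eq : (fun s => if deriv q s = 0 then 0 else φ |deriv q s| * deriv q s)
        = fun s => φ (deriv q s) * deriv q s := by
      funext s
      have h := hqpos s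
      rw [if_neg (ne_of_gt h), abs_of_pos h]
    have hB : HasDerivAt (fun s => φ (deriv q s) * deriv q s) (deriv V (q t)) t := by
      rw [← hf_eq]; exact hq.2 t
    have hA : HasDerivAt (fun s => φ (deriv q s) * deriv q s)
        ((deriv φ y * y + φ y) * deriv (deriv q) t) t :=
      by have h := (hD (deriv q t) hy).comp t hq't; exact h
    have hVals : (deriv φ y * y + φ y) * deriv (deriv q) t = deriv V (q t) :=
      hA.unique hB
    have hG : HasDerivAt (fun s => Gfun φ (deriv q s)) (g y * deriv (deriv q) t) t :=
      by have h := (hGderiv (deriv q t) hy).comp t hq't; exact h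
    have hVq : HasDerivAt (fun s => V (q s)) (deriv V (q t) * y) t :=
      ((hV1.differentiable one_ne_zero (q t)).hasDerivAt).comp t ((hq.1 t).hasDerivAt)
    have : HasDerivAt E (g y * deriv (deriv q) t - deriv V (q t) * y) t := hG.sub hVq
    have hzero : g y * deriv (deriv q) t - deriv V (q t) * y = 0 := by
      rw [← hVals]; simp only [hg_def]; ring
    rwa [hzero] at this
  have hEconst : ∀ t : ℝ, E t = E 0 :=
    fun t => is_const_of_deriv_eq_zero (fun s => (hEderiv s).differentiableAt)
      (fun s => (hEderiv s).deriv) t 0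
  set c : ℝ := E 0 with hc_def
  -- Phi is nonneg, Gfun nonneg, and Gfun ≤ (m-1) Phi on positive reals
  have hPhinn : ∀ y : ℝ, 0 ≤ Phi φ y := by
    intro y
    refine intervalIntegral.integral_nonneg (abs_nonneg y) ?_
    intro u hu
    rcases eq_or_lt_of_le hu.1 with h | h
    · simp [← h]
    · exact le_of_lt (mul_pos h (hφpos u h))
  have hGnn : ∀ y : ℝ, 0 < y → 0 ≤ Gfun φ y := by
    intro y hy
    refine intervalIntegral.integral_nonneg hy.le ?_
    intro u hu
    exact hgnn u hu.1
  have hGlePhi : ∀ y : ℝ, 0 < y → Gfun φ y ≤ (m - 1) * Phi φ y := by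
    intro y hy
    have h1 : Gfun φ y ≤ ∫ s in (0:ℝ)..y, (m - 1) * (s * φ s) := by
      refine intervalIntegral.integral_mono_on hy.le (hint_g y hy)
        ((hint_sφ y hy).const_mul (m - 1)) ?_
      intro s hs
      rcases eq_or_lt_of_le hs.1 with h | h
      · simp [hg_def, ← h]
      · have := hsum_le s h
        calc g s = s * (deriv φ s * s + φ s) := rfl
          _ ≤ s * ((m - 1) * φ s) := mul_le_mul_of_nonneg_left this h.le
          _ = (m - 1) * (s * φ s) := by ring
    rw [intervalIntegral.integral_const_mul] at h1
    rw [Phi, abs_of_pos hy]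
    exact h1
  -- c = 0 or infinite energy
  have hc0 : c = 0 := by
    by_contra hne
    -- produce a uniform positive lower bound ε on the energy density
    obtain ⟨ε, hεpos, hεle⟩ :
        ∃ ε : ℝ, 0 < ε ∧ ∀ t : ℝ, ε ≤ Phi φ (deriv q t) + V (q t) := by
      rcases lt_or_gt_of_ne hne with hneg | hpos
      · refine ⟨-c, by linarith, fun t => ?_⟩
        have h1 : Gfun φ (deriv q t) - V (q t) = c := hEconst t
        have h2 : 0 ≤ Gfun φ (deriv q t) := hGnn _ (hqpos t)
        have h3 : 0 ≤ Phi φ (deriv q t) := hPhinn _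
        linarith
      · refine ⟨c / (m - 1), div_pos hpos hm1, fun t => ?_⟩
        have h1 : Gfun φ (deriv q t) - V (q t) = c := hEconst t
        have h2 : Gfun φ (deriv q t) ≤ (m - 1) * Phi φ (deriv q t) :=
          hGlePhi _ (hqpos t)
        have h4 : 0 ≤ V (q t) := hVnn _
        have h5 : c ≤ (m - 1) * Phi φ (deriv q t) := by linarith
        have h6 : c / (m - 1) ≤ Phi φ (deriv q t) := by
          rw [div_le_iff₀ hm1]; linarith [h5]
        linarith
    have hle : (∫⁻ t : ℝ, ENNReal.ofReal ε) ≤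
        ∫⁻ t : ℝ, ENNReal.ofReal (Phi φ (deriv q t) + V (q t)) :=
      lintegral_mono fun t => ENNReal.ofReal_le_ofReal (hεle t)
    rw [lintegral_const] at hle
    have : ENNReal.ofReal ε * volume (univ : Set ℝ) = ⊤ := by
      rw [Real.volume_univ, ENNReal.mul_top]
      simpa using hεpos
    rw [this] at hle
    exact absurd (lt_of_le_of_lt hle hfin) (lt_irrefl _)
  intro t
  have := hEconst t
  rw [hc0] at this
  -- E t = 0
  have : Gfun φ (deriv q t) - V (q t) = 0 := this
  linarith
end
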